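/- arXiv:1602.08938 — 5 statements merged into one kernel-verified Lean document; each statement's English description precedes it below -/
import Mathlib

section
/- Let X_n be a sequence of non-negative random variables converging in distribution to a random variable X with E[X] = +∞. For each n let X_{n,1},…,X_{n,n} be i.i.d. copies of X_n. Then there exists a nonrandom positive sequence φ_n → +∞ such that P(X_{n,1} + ⋯ + X_{n,n} > φ_n·n) → 1 as n → ∞. -/
open MeasureTheory ProbabilityTheory Filter
open scoped Topology BoundedContinuousFunction ENNReal

noncomputable def truncBCF (M : ℝ) : ℝ →ᵇ ℝ :=
  BoundedContinuousFunction.mkOfBound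
    ⟨fun x => min (max x 0) (max M 0), by fun_prop⟩ (max M 0) (by
      intro x y
      rw [Real.dist_eq]
      have h1 : ∀ z : ℝ, 0 ≤ min (max z 0) (max M 0) :=
        fun z => le_min (le_max_right _ _) (le_max_right _ _)
      have h2 : ∀ z : ℝ, min (max z 0) (max M 0) ≤ max M 0 := fun z => min_le_right _ _
      rw [abs_sub_le_iff]
      constructor <;> simp only [ContinuousMap.coe_mk] <;> nlinarith [h1 x, h1 y, h2 x, h2 y])

lemma truncBCF_apply (M x : ℝ) : truncBCF M x = min (max x 0) (max M 0) := rfl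

lemma truncBCF_nonneg (M x : ℝ) : 0 ≤ truncBCF M x :=
  le_min (le_max_right _ _) (le_max_right _ _)

lemma truncBCF_le (M x : ℝ) : truncBCF M x ≤ max M 0 := min_le_right _ _

lemma truncBCF_le_self (M x : ℝ) (hx : 0 ≤ x) : truncBCF M x ≤ x := by
  rw [truncBCF_apply, max_eq_left hx]; exact min_le_left _ _

lemma keylem {Ω : Type*} [MeasurableSpace Ω] (μ : Measure Ω) [IsProbabilityMeasure μ]
    (X : ℕ → Ω → ℝ) (Xlim : Ω → ℝ)
    (hXmeas : ∀ n, Measurable (X n)) (hXlimMeas : Measurable Xlim)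
    (hXnonneg : ∀ n ω, 0 ≤ X n ω) (hXlimNonneg : ∀ ω, 0 ≤ Xlim ω)
    (hconv : ∀ f : ℝ →ᵇ ℝ,
      Tendsto (fun n => ∫ ω, f (X n ω) ∂μ) atTop (𝓝 (∫ ω, f (Xlim ω) ∂μ)))
    (hmean : ∫⁻ ω, ENNReal.ofReal (Xlim ω) ∂μ = ⊤)
    (Y : ℕ → ℕ → Ω → ℝ)
    (hYindep : ∀ n, iIndepFun (m := fun _ : Fin n => Real.measurableSpace)
      (fun i : Fin n => Y n i) μ)
    (hYdist : ∀ n i, i < n → μ.map (Y n i) = μ.map (X n))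
    (c : ℝ) (hc : 0 < c) :
    Tendsto (fun n => μ {ω | c * n < ∑ i ∈ Finset.range n, Y n i ω}) atTop (𝓝 1) := by
  -- basic facts about Y
  have hYae : ∀ n i, i < n → AEMeasurable (Y n i) μ := by
    intro n i hi
    by_contra h
    have h0 : μ.map (Y n i) = 0 := Measure.map_of_not_aemeasurable h
    rw [hYdist n i hi] at h0
    have : (μ.map (X n)) Set.univ = 1 := by
      rw [Measure.map_apply (hXmeas n) MeasurableSet.univ]; simp
    rw [h0] at this; simp at this
  have hYnn : ∀ n i, i < n → ∀ᵐ ω ∂μ, 0 ≤ Y n i ω := by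
    intro n i hi
    have hs : MeasurableSet {x : ℝ | x < 0} := measurableSet_Iio
    have h1 : μ.map (X n) {x | x < 0} = 0 := by
      rw [Measure.map_apply (hXmeas n) hs]
      have : X n ⁻¹' {x | x < 0} = ∅ := by
        ext ω; simp [Set.mem_preimage, not_lt.mpr (hXnonneg n ω)]
      rw [this, measure_empty]
    have h2 : μ (Y n i ⁻¹' {x | x < 0}) = 0 := by
      rw [← Measure.map_apply_of_aemeasurable (hYae n i hi) hs, hYdist n i hi]; exact h1
    rw [ae_iff]
    simpa [Set.preimage, not_le] using h2
  have hYfint : ∀ (f : ℝ →ᵇ ℝ) n i, i < n →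
      ∫ ω, f (Y n i ω) ∂μ = ∫ ω, f (X n ω) ∂μ := by
    intro f n i hi
    rw [← integral_map (hYae n i hi) f.continuous.measurable.aestronglyMeasurable,
      hYdist n i hi, integral_map (hXmeas n).aemeasurable
        f.continuous.measurable.aestronglyMeasurable]
  -- choose truncation level
  have hmono : Monotone fun j : ℕ => fun ω => ENNReal.ofReal (min (Xlim ω) j) := by
    intro j k hjk ω
    exact ENNReal.ofReal_le_ofReal (min_le_min le_rfl (by exact_mod_cast hjk))
  have hlift : ∀ ω, ⨆ j : ℕ, ENNReal.ofReal (min (Xlim ω) j) = ENNReal.ofReal (Xlim ω) := by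
    intro ω
    refine le_antisymm (iSup_le fun j => ENNReal.ofReal_le_ofReal (min_le_left _ _)) ?_
    refine le_iSup_of_le ⌈Xlim ω⌉₊ ?_
    rw [min_eq_left (Nat.le_ceil _)]
  have hsup : ⨆ j : ℕ, ∫⁻ ω, ENNReal.ofReal (min (Xlim ω) j) ∂μ = ⊤ := by
    rw [← lintegral_iSup (fun j => ((hXlimMeas.min measurable_const).ennreal_ofReal)) hmono]
    simp_rw [hlift]; exact hmean
  obtain ⟨j, hj⟩ : ∃ j : ℕ, ENNReal.ofReal (c + 2) < ∫⁻ ω, ENNReal.ofReal (min (Xlim ω) j) ∂μ := by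
    rw [← lt_iSup_iff, hsup]; exact ENNReal.ofReal_lt_top
  set M : ℝ := (j : ℝ) with hMdef
  have hM0 : 0 ≤ M := Nat.cast_nonneg _
  have hMM : max M 0 = M := max_eq_left hM0
  set f : ℝ →ᵇ ℝ := truncBCF M with hfdef
  have hfX : ∀ ω, f (Xlim ω) = min (Xlim ω) M := by
    intro ω
    rw [hfdef, truncBCF_apply, max_eq_left (hXlimNonneg ω), hMM]
  -- c + 2 < ∫ f (Xlim)
  have hEXlim : c + 2 < ∫ ω, f (Xlim ω) ∂μ := by
    have heq : ∫ ω, f (Xlim ω) ∂μ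
        = (∫⁻ ω, ENNReal.ofReal (min (Xlim ω) M) ∂μ).toReal := by
      have h1 : ∫ ω, f (Xlim ω) ∂μ = ∫ ω, min (Xlim ω) M ∂μ :=
        integral_congr_ae (Eventually.of_forall hfX)
      rw [h1, integral_eq_lintegral_of_nonneg_ae
        (Eventually.of_forall fun ω => le_min (hXlimNonneg ω) hM0)
        (hXlimMeas.min measurable_const).aestronglyMeasurable]
    have hfin : ∫⁻ ω, ENNReal.ofReal (min (Xlim ω) M) ∂μ ≠ ⊤ := by
      have hle : ∫⁻ ω, ENNReal.ofReal (min (Xlim ω) M) ∂μ ≤ ENNReal.ofReal M := by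
        calc ∫⁻ ω, ENNReal.ofReal (min (Xlim ω) M) ∂μ
            ≤ ∫⁻ _ω, ENNReal.ofReal M ∂μ :=
              lintegral_mono fun ω => ENNReal.ofReal_le_ofReal (min_le_right _ _)
          _ = ENNReal.ofReal M := by simp
      exact ne_top_of_le_ne_top ENNReal.ofReal_ne_top hle
    rw [heq]
    exact (ENNReal.ofReal_lt_iff_lt_toReal (by linarith) hfin).mp hj
  have hEXn : ∀ᶠ n in atTop, c + 2 ≤ ∫ ω, f (X n ω) ∂μ :=
    (hconv f).eventually_const_le hEXlim
  -- main estimate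
  have hmain : ∀ᶠ n : ℕ in atTop,
      1 - ENNReal.ofReal (M ^ 2 / (n : ℝ)) ≤ μ {ω | c * (n : ℝ) < ∑ i ∈ Finset.range n, Y n i ω} := by
    filter_upwards [hEXn, eventually_ge_atTop 1] with n hEn hn1
    have hnpos : (0 : ℝ) < n := by exact_mod_cast hn1
    set Z : Fin n → Ω → ℝ := fun i => f ∘ Y n i with hZdef
    have hZm : ∀ i : Fin n, AEStronglyMeasurable (Z i) μ := fun i =>
      (f.continuous.measurable.comp_aemeasurable (hYae n i i.isLt)).aestronglyMeasurable
    have hZ0 : ∀ (i : Fin n) (ω : Ω), 0 ≤ Z i ω := fun i ω => truncBCF_nonneg M (Y n i ω)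
    have hZle : ∀ (i : Fin n) (ω : Ω), Z i ω ≤ M := fun i ω =>
      (truncBCF_le M (Y n i ω)).trans hMM.le
    have hZbd : ∀ i (ω : Ω), ‖Z i ω‖ ≤ M := fun i ω => by
      rw [Real.norm_eq_abs, abs_of_nonneg (hZ0 i ω)]; exact hZle i ω
    have hZ2 : ∀ i : Fin n, MemLp (Z i) 2 μ := fun i =>
      MemLp.of_bound (hZm i) M (Eventually.of_forall (hZbd i))
    have hTmem : MemLp (∑ i, Z i) 2 μ := memLp_finset_sum' _ fun i _ => hZ2 i
    have hpair : Set.Pairwise ↑(Finset.univ : Finset (Fin n))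
        fun i j => IndepFun (Z i) (Z j) μ := fun i _ j _ hij =>
      ((hYindep n).indepFun hij).comp f.continuous.measurable f.continuous.measurable
    have hVi : ∀ i : Fin n, variance (Z i) μ ≤ M ^ 2 := by
      intro i
      refine (variance_le_expectation_sq (hZm i)).trans ?_
      have : ∫ ω, (Z i ω) ^ 2 ∂μ ≤ ∫ _ω, M ^ 2 ∂μ := by
        refine integral_mono ((hZ2 i).integrable_sq) (integrable_const _) fun ω => ?_
        have h0 := hZ0 i ω
        have h1 := hZle i ω
        simp only [Pi.pow_apply]
        nlinarith
      simpa using this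
    have hVarT : variance (∑ i, Z i) μ ≤ n * M ^ 2 := by
      rw [IndepFun.variance_sum (fun i _ => hZ2 i) hpair]
      calc ∑ i : Fin n, variance (Z i) μ ≤ ∑ _i : Fin n, M ^ 2 := Finset.sum_le_sum fun i _ => hVi i
        _ = n * M ^ 2 := by simp [mul_comm]
    have hETt : μ[∑ i, Z i] = ∑ i : Fin n, ∫ ω, Z i ω ∂μ := by
      have h := integral_finset_sum (Finset.univ : Finset (Fin n))
        (fun i _ => (hZ2 i).integrable one_le_two)
      simpa using h
    have hET : (c + 2) * n ≤ μ[∑ i, Z i] := by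
      rw [hETt]
      have : ∀ i : Fin n, ∫ ω, Z i ω ∂μ = ∫ ω, f (X n ω) ∂μ := fun i =>
        hYfint f n i i.isLt
      rw [Finset.sum_congr rfl fun i _ => this i, Finset.sum_const]
      simp only [Finset.card_univ, Fintype.card_fin, nsmul_eq_mul]
      calc (c + 2) * n = n * (c + 2) := by ring
        _ ≤ n * ∫ ω, f (X n ω) ∂μ := by
            exact mul_le_mul_of_nonneg_left hEn (by positivity)
    -- Chebyshev
    have hcheb : μ {ω | (n : ℝ) ≤ |(∑ i, Z i) ω - μ[∑ i, Z i]|}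
        ≤ ENNReal.ofReal (M ^ 2 / n) := by
      refine (meas_ge_le_variance_div_sq hTmem hnpos).trans ?_
      refine ENNReal.ofReal_le_ofReal ?_
      rw [div_le_div_iff₀ (by positivity) hnpos]
      calc variance (∑ i, Z i) μ * n ≤ (n * M ^ 2) * n :=
            mul_le_mul_of_nonneg_right hVarT hnpos.le
        _ = M ^ 2 * n ^ 2 := by ring
    -- inclusion
    have hae : ∀ᵐ ω ∂μ, ∀ i : Fin n, 0 ≤ Y n i ω :=
      ae_all_iff.mpr fun i => hYnn n i i.isLt
    have hsub : {ω | ¬ (c * n < ∑ i ∈ Finset.range n, Y n i ω)}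
        ≤ᵐ[μ] {ω | (n : ℝ) ≤ |(∑ i, Z i) ω - μ[∑ i, Z i]|} := by
      filter_upwards [hae] with ω hω hmem
      simp only [Set.mem_setOf_eq, not_lt] at hmem ⊢
      have hTS : (∑ i, Z i) ω ≤ ∑ i ∈ Finset.range n, Y n i ω := by
        rw [Finset.sum_apply, ← Fin.sum_univ_eq_sum_range (fun i => Y n i ω)]
        exact Finset.sum_le_sum fun i _ => truncBCF_le_self M _ (hω i)
      have h1 : (∑ i, Z i) ω ≤ c * n := hTS.trans hmem
      have h2 : (c + 2) * n ≤ μ[∑ i, Z i] := hET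
      have : (n : ℝ) ≤ μ[∑ i, Z i] - (∑ i, Z i) ω := by nlinarith
      calc (n : ℝ) ≤ μ[∑ i, Z i] - (∑ i, Z i) ω := this
        _ ≤ |μ[∑ i, Z i] - (∑ i, Z i) ω| := le_abs_self _
        _ = |(∑ i, Z i) ω - μ[∑ i, Z i]| := abs_sub_comm _ _
    have hbad : μ {ω | ¬ (c * n < ∑ i ∈ Finset.range n, Y n i ω)}
        ≤ ENNReal.ofReal (M ^ 2 / n) := (measure_mono_ae hsub).trans hcheb
    -- complement
    have hSaem : AEMeasurable (fun ω => ∑ i ∈ Finset.range n, Y n i ω) μ :=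
      Finset.aemeasurable_fun_sum _ fun i hi => hYae n i (Finset.mem_range.mp hi)
    have hnm : NullMeasurableSet {ω | c * n < ∑ i ∈ Finset.range n, Y n i ω} μ :=
      hSaem.nullMeasurable measurableSet_Ioi
    have hcompl := measure_add_measure_compl₀ hnm
    have hcset : {ω | c * n < ∑ i ∈ Finset.range n, Y n i ω}ᶜ
        = {ω | ¬ (c * n < ∑ i ∈ Finset.range n, Y n i ω)} := by
      ext ω; simp
    rw [hcset] at hcompl
    have := tsub_le_tsub_left hbad (1 : ℝ≥0∞)
    calc (1 : ℝ≥0∞) - ENNReal.ofReal (M ^ 2 / n)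
        ≤ 1 - μ {ω | ¬ (c * n < ∑ i ∈ Finset.range n, Y n i ω)} := this
      _ ≤ μ {ω | c * n < ∑ i ∈ Finset.range n, Y n i ω} := by
          rw [measure_univ] at hcompl
          exact tsub_le_iff_right.mpr hcompl.ge
  -- squeeze
  have hlow : Tendsto (fun n : ℕ => 1 - ENNReal.ofReal (M ^ 2 / n)) atTop (𝓝 1) := by
    have h0 : Tendsto (fun n : ℕ => ENNReal.ofReal (M ^ 2 / n)) atTop (𝓝 0) := by
      have := tendsto_const_div_atTop_nhds_zero_nat (M ^ 2)
      have h := (ENNReal.continuous_ofReal.tendsto 0).comp this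
      simpa [Function.comp_def] using h
    have := ENNReal.Tendsto.sub (tendsto_const_nhds (x := (1 : ℝ≥0∞))) h0
      (Or.inl ENNReal.one_ne_top)
    simpa using this
  refine tendsto_of_tendsto_of_tendsto_of_le_of_le' hlow tendsto_const_nhds hmain ?_
  exact Eventually.of_forall fun n => prob_le_one

theorem stmt0 {Ω : Type*} [MeasurableSpace Ω] (μ : Measure Ω) [IsProbabilityMeasure μ]
    (X : ℕ → Ω → ℝ) (Xlim : Ω → ℝ)
    (hXmeas : ∀ n, Measurable (X n)) (hXlimMeas : Measurable Xlim)
    (hXnonneg : ∀ n ω, 0 ≤ X n ω) (hXlimNonneg : ∀ ω, 0 ≤ Xlim ω)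
    (hconv : ∀ f : ℝ →ᵇ ℝ,
      Tendsto (fun n => ∫ ω, f (X n ω) ∂μ) atTop (𝓝 (∫ ω, f (Xlim ω) ∂μ)))
    (hmean : ∫⁻ ω, ENNReal.ofReal (Xlim ω) ∂μ = ⊤)
    (Y : ℕ → ℕ → Ω → ℝ)
    (hYindep : ∀ n, iIndepFun (m := fun _ : Fin n => Real.measurableSpace)
      (fun i : Fin n => Y n i) μ)
    (hYdist : ∀ n i, i < n → μ.map (Y n i) = μ.map (X n)) :
    ∃ φ : ℕ → ℝ, (∀ n, 0 < φ n) ∧ Tendsto φ atTop atTop ∧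
      Tendsto (fun n => μ {ω | φ n * n < ∑ i ∈ Finset.range n, Y n i ω}) atTop (𝓝 1) := by
  have key : ∀ c : ℝ, 0 < c →
      Tendsto (fun n => μ {ω | c * n < ∑ i ∈ Finset.range n, Y n i ω}) atTop (𝓝 1) :=
    fun c hc => keylem μ X Xlim hXmeas hXlimMeas hXnonneg hXlimNonneg hconv hmean Y
      hYindep hYdist c hc
  -- extract thresholds
  have H : ∀ k : ℕ, ∃ N : ℕ, ∀ n ≥ N,
      1 - (((k + 1 : ℕ) : ℝ≥0∞))⁻¹
        ≤ μ {ω | (((k + 1 : ℕ) : ℝ)) * n < ∑ i ∈ Finset.range n, Y n i ω} := by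
    intro k
    have hlt : (1 : ℝ≥0∞) - (((k + 1 : ℕ) : ℝ≥0∞))⁻¹ < 1 := by
      refine ENNReal.sub_lt_self ENNReal.one_ne_top one_ne_zero ?_
      simp [ENNReal.inv_ne_zero]
    have := (key (((k + 1 : ℕ) : ℝ)) (by positivity)).eventually_const_le hlt
    exact eventually_atTop.mp this
  choose g hg using H
  set N : ℕ → ℕ := fun k => k + (Finset.range (k + 1)).sup g with hNdef
  have hNg : ∀ k, g k ≤ N k := fun k =>
    le_add_of_nonneg_of_le (Nat.zero_le _)
      (Finset.le_sup (Finset.mem_range.mpr (Nat.lt_succ_self k)))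
  have hNk : ∀ k, k ≤ N k := fun k => Nat.le_add_right _ _
  set K : ℕ → ℕ := fun n => Nat.findGreatest (fun k => N k ≤ n) n with hKdef
  have hKge : ∀ k n, N k ≤ n → k ≤ K n := fun k n h =>
    Nat.le_findGreatest ((hNk k).trans h) h
  have hKspec : ∀ n, N 0 ≤ n → N (K n) ≤ n := fun n h =>
    Nat.findGreatest_spec (P := fun k => N k ≤ n) (Nat.zero_le n) h
  have hKtop : Tendsto K atTop atTop :=
    tendsto_atTop_atTop.mpr fun k => ⟨N k, fun n hn => hKge k n hn⟩
  have h2 : Tendsto (fun n => K n + 1) atTop atTop :=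
    tendsto_atTop_mono (fun n => Nat.le_succ (K n)) hKtop
  refine ⟨fun n => ((K n + 1 : ℕ) : ℝ), fun n => by positivity, ?_, ?_⟩
  · exact tendsto_natCast_atTop_atTop.comp h2
  · have h1 : Tendsto (fun n => ((K n + 1 : ℕ) : ℝ≥0∞)) atTop (𝓝 ⊤) :=
      ENNReal.tendsto_nat_nhds_top.comp h2
    have h4 : Tendsto (fun n => (((K n + 1 : ℕ) : ℝ≥0∞))⁻¹) atTop (𝓝 0) := by
      rw [← ENNReal.inv_top]
      exact ENNReal.tendsto_inv_iff.mpr h1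
    have hlow : Tendsto (fun n => 1 - (((K n + 1 : ℕ) : ℝ≥0∞))⁻¹) atTop (𝓝 1) := by
      have h5 := ENNReal.Tendsto.sub (tendsto_const_nhds (x := (1 : ℝ≥0∞))) h4
        (Or.inl ENNReal.one_ne_top)
      simpa using h5
    refine tendsto_of_tendsto_of_tendsto_of_le_of_le' hlow tendsto_const_nhds ?_
      (Eventually.of_forall fun n => prob_le_one)
    filter_upwards [eventually_ge_atTop (N 0)] with n hn
    exact hg (K n) n ((hNg (K n)).trans (hKspec n hn))
end

section
/- Let Z be a non-negative random variable with E[Z] < ∞. Then there exists a positive decreasing function ε : (0,∞) → (0,∞) with ε(s) → 0 as s → +∞ such that P(Z > s·ε(s)) = o(s^{−1}) as s → +∞. -/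
open MeasureTheory Filter
open scoped Topology

private lemma sqrt_tendsto_atTop : Tendsto Real.sqrt atTop atTop := by
  apply tendsto_atTop_atTop.2
  intro b
  refine ⟨max (b ^ 2) 0, fun a ha => ?_⟩
  have h1 : b ^ 2 ≤ a := le_trans (le_max_left _ _) ha
  have h2 : (0 : ℝ) ≤ a := le_trans (le_max_right _ _) ha
  calc b ≤ |b| := le_abs_self b
    _ = Real.sqrt (b ^ 2) := (Real.sqrt_sq_eq_abs b).symm
    _ ≤ Real.sqrt a := Real.sqrt_le_sqrt h1

theorem stmt4 {Ω : Type*} [MeasurableSpace Ω] (μ : Measure Ω) [IsProbabilityMeasure μ]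
    (Z : Ω → ℝ) (hZnonneg : ∀ ω, 0 ≤ Z ω) (hZint : Integrable Z μ) :
    ∃ ε : ℝ → ℝ, (∀ s, 0 < s → 0 < ε s) ∧ AntitoneOn ε (Set.Ioi 0) ∧
      Tendsto ε atTop (𝓝 0) ∧
      Tendsto (fun s => s * (μ {ω | s * ε s < Z ω}).toReal) atTop (𝓝 0) := by
  -- a measurable nonnegative representative of Z
  obtain ⟨W0, hW0meas, hZW0⟩ : ∃ W0, Measurable W0 ∧ Z =ᵐ[μ] W0 :=
    ⟨hZint.1.mk Z, hZint.1.measurable_mk, hZint.1.ae_eq_mk⟩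
  set W : Ω → ℝ := fun ω => max (W0 ω) 0 with hWdef
  have hWmeas : Measurable W := hW0meas.max measurable_const
  have hWnonneg : ∀ ω, 0 ≤ W ω := fun ω => le_max_right _ _
  have hZW : Z =ᵐ[μ] W := by
    filter_upwards [hZW0] with ω h
    simp only [hWdef, ← h]
    exact (max_eq_left (hZnonneg ω)).symm
  have hWint : Integrable W μ := hZint.congr hZW
  -- the tail integral g
  set g : ℝ → ℝ := fun t => ∫ ω in {ω | t ≤ W ω}, W ω ∂μ with hgdef
  have hg_nonneg : ∀ t, 0 ≤ g t := fun t =>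
    setIntegral_nonneg (measurableSet_le measurable_const hWmeas) fun ω _ => hWnonneg ω
  have hg_anti : Antitone g := by
    intro a b hab
    apply setIntegral_mono_set hWint.integrableOn
      (Eventually.of_forall fun ω => hWnonneg ω)
    exact HasSubset.Subset.eventuallyLE fun ω h => le_trans hab h
  -- the tail measure tends to zero
  have hμt : Tendsto (fun t : ℝ => μ {ω | t ≤ W ω}) atTop (𝓝 0) := by
    set L := ∫⁻ ω, ENNReal.ofReal (W ω) ∂μ with hLdef
    have hL : L ≠ ⊤ := hWint.lintegral_lt_top.ne
    have hbound : ∀ᶠ t : ℝ in atTop, μ {ω | t ≤ W ω} ≤ L * (ENNReal.ofReal t)⁻¹ := by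
      filter_upwards [eventually_ge_atTop (1 : ℝ)] with t ht
      have hsub : {ω | t ≤ W ω} ⊆ {ω | ENNReal.ofReal t ≤ ENNReal.ofReal (W ω)} :=
        fun ω h => ENNReal.ofReal_le_ofReal h
      have hMarkov := meas_ge_le_lintegral_div (μ := μ)
        (hWmeas.ennreal_ofReal).aemeasurable
        (ε := ENNReal.ofReal t)
        ((ENNReal.ofReal_pos.2 (by linarith)).ne') ENNReal.ofReal_ne_top
      calc μ {ω | t ≤ W ω} ≤ μ {ω | ENNReal.ofReal t ≤ ENNReal.ofReal (W ω)} :=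
            measure_mono hsub
        _ ≤ L / ENNReal.ofReal t := hMarkov
        _ = L * (ENNReal.ofReal t)⁻¹ := by rw [ENNReal.div_eq_inv_mul, mul_comm]
    have hinv : Tendsto (fun t : ℝ => (ENNReal.ofReal t)⁻¹) atTop (𝓝 0) := by
      have := ENNReal.tendsto_inv_iff.2 ENNReal.tendsto_ofReal_atTop
      simpa using this
    have hmul : Tendsto (fun t : ℝ => L * (ENNReal.ofReal t)⁻¹) atTop (𝓝 0) := by
      have := ENNReal.Tendsto.const_mul (a := L) hinv (Or.inr hL)
      simpa using this
    exact tendsto_of_tendsto_of_tendsto_of_le_of_le' tendsto_const_nhds hmul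
      (Eventually.of_forall fun t => zero_le) hbound
  have hg0 : Tendsto g atTop (𝓝 0) := hWint.tendsto_setIntegral_nhds_zero hμt
  -- the upper bound function tends to zero
  have hub : Tendsto (fun s => Real.sqrt (g (Real.sqrt s))) atTop (𝓝 0) := by
    have h1 : Tendsto (fun s => g (Real.sqrt s)) atTop (𝓝 0) :=
      hg0.comp sqrt_tendsto_atTop
    have h2 : Tendsto Real.sqrt (𝓝 0) (𝓝 0) := by
      have := Real.continuous_sqrt.tendsto 0
      simpa using this
    exact h2.comp h1
  -- definition of ε
  refine ⟨fun s => max (Real.sqrt (g (Real.sqrt s))) (1 / Real.sqrt (Real.sqrt s)),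
    ?_, ?_, ?_, ?_⟩
  · intro s hs
    have : 0 < Real.sqrt (Real.sqrt s) := Real.sqrt_pos.2 (Real.sqrt_pos.2 hs)
    exact lt_max_of_lt_right (by positivity)
  · intro a ha b hb hab
    apply max_le_max
    · exact Real.sqrt_le_sqrt (hg_anti (Real.sqrt_le_sqrt hab))
    · apply one_div_le_one_div_of_le (Real.sqrt_pos.2 (Real.sqrt_pos.2 ha))
      exact Real.sqrt_le_sqrt (Real.sqrt_le_sqrt hab)
  · have h2 : Tendsto (fun s => 1 / Real.sqrt (Real.sqrt s)) atTop (𝓝 0) := by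
      simp only [one_div]; exact (sqrt_tendsto_atTop.comp sqrt_tendsto_atTop).inv_tendsto_atTop
    simpa using hub.max h2
  · set ε : ℝ → ℝ := fun s => max (Real.sqrt (g (Real.sqrt s))) (1 / Real.sqrt (Real.sqrt s))
      with hεdef
    have key : ∀ s : ℝ, 1 ≤ s →
        s * (μ {ω | s * ε s < Z ω}).toReal ≤ Real.sqrt (g (Real.sqrt s)) := by
      intro s hs
      have hs0 : (0 : ℝ) < s := lt_of_lt_of_le one_pos hs
      have hss : (0 : ℝ) < Real.sqrt (Real.sqrt s) := Real.sqrt_pos.2 (Real.sqrt_pos.2 hs0)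
      have hεpos : 0 < ε s := lt_max_of_lt_right (by positivity)
      -- sets with Z and W have the same measure
      have hset_eq : μ {ω | s * ε s < Z ω} = μ {ω | s * ε s < W ω} := by
        apply measure_congr
        filter_upwards [hZW] with ω h
        change (s * ε s < Z ω) = (s * ε s < W ω)
        rw [h]
      -- √s ≤ s * ε s
      have h1 : Real.sqrt s ≤ s * ε s := by
        have hsq : Real.sqrt (Real.sqrt s) ≤ Real.sqrt s := by
          apply Real.sqrt_le_sqrt
          calc Real.sqrt s = Real.sqrt s * 1 := (mul_one _).symm
            _ ≤ Real.sqrt s * Real.sqrt s := by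
                apply mul_le_mul_of_nonneg_left _ (Real.sqrt_nonneg s)
                exact Real.one_le_sqrt.2 hs
            _ = s := Real.mul_self_sqrt hs0.le
        have : Real.sqrt s ≤ s / Real.sqrt (Real.sqrt s) := by
          rw [le_div_iff₀ hss]
          calc Real.sqrt s * Real.sqrt (Real.sqrt s)
              ≤ Real.sqrt s * Real.sqrt s :=
                mul_le_mul_of_nonneg_left hsq (Real.sqrt_nonneg s)
            _ = s := Real.mul_self_sqrt hs0.le
        calc Real.sqrt s ≤ s / Real.sqrt (Real.sqrt s) := this
          _ = s * (1 / Real.sqrt (Real.sqrt s)) := by ring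
          _ ≤ s * ε s := mul_le_mul_of_nonneg_left (le_max_right _ _) hs0.le
      have hsub : {ω | s * ε s < W ω} ⊆ {ω | Real.sqrt s ≤ W ω} :=
        fun ω h => le_trans h1 (le_of_lt h)
      have hmeas_set : MeasurableSet {ω | s * ε s < W ω} :=
        measurableSet_lt measurable_const hWmeas
      -- Markov inequality
      have hmarkov : (s * ε s) * (μ {ω | s * ε s < W ω}).toReal
          ≤ ∫ ω in {ω | s * ε s < W ω}, W ω ∂μ :=
        setIntegral_ge_of_const_le_real hmeas_set (measure_ne_top μ _)
          (fun ω h => le_of_lt h) hWint.integrableOn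
      have hIle : ∫ ω in {ω | s * ε s < W ω}, W ω ∂μ ≤ g (Real.sqrt s) :=
        setIntegral_mono_set hWint.integrableOn
          (Eventually.of_forall fun ω => hWnonneg ω)
          (HasSubset.Subset.eventuallyLE hsub)
      -- g(√s) / ε s ≤ √(g(√s))
      have hεge : Real.sqrt (g (Real.sqrt s)) ≤ ε s := le_max_left _ _
      have hfinal : g (Real.sqrt s) / ε s ≤ Real.sqrt (g (Real.sqrt s)) := by
        rw [div_le_iff₀ hεpos]
        calc g (Real.sqrt s)
            = Real.sqrt (g (Real.sqrt s)) * Real.sqrt (g (Real.sqrt s)) :=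
              (Real.mul_self_sqrt (hg_nonneg _)).symm
          _ ≤ Real.sqrt (g (Real.sqrt s)) * ε s :=
              mul_le_mul_of_nonneg_left hεge (Real.sqrt_nonneg _)
      calc s * (μ {ω | s * ε s < Z ω}).toReal
          = ((s * ε s) * (μ {ω | s * ε s < W ω}).toReal) / ε s := by
            rw [hset_eq]; field_simp
        _ ≤ (∫ ω in {ω | s * ε s < W ω}, W ω ∂μ) / ε s := by gcongr
        _ ≤ g (Real.sqrt s) / ε s := by gcongr
        _ ≤ Real.sqrt (g (Real.sqrt s)) := hfinal
    apply tendsto_of_tendsto_of_tendsto_of_le_of_le' tendsto_const_nhds hub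
    · filter_upwards [eventually_ge_atTop (0 : ℝ)] with s hs
      exact mul_nonneg hs ENNReal.toReal_nonneg
    · filter_upwards [eventually_ge_atTop (1 : ℝ)] with s hs
      exact key s hs
end

section
/- Let X_n be non-negative random variables converging in distribution to X, with 0 < E[X²] < ∞, E[X³] = ∞, E[X_n²] < ∞ for each n, and E[X_n²] → E[X²]. Let m_n ↑ ∞ be integers and X_{n,1},…,X_{n,m_n} i.i.d. copies of X_n, and set S_n = Σ_{j≤m_n} X_{n,j}³. Then m_n^{−3}·Σ_{{j,k}⊂[m_n]} X_{n,j}³ X_{n,k}³ = o_P(S_n). -/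
open MeasureTheory ProbabilityTheory Filter
open scoped Topology BoundedContinuousFunction

theorem stmt9 {Ω : Type*} [MeasurableSpace Ω] (μ : Measure Ω) [IsProbabilityMeasure μ]
    (X : ℕ → Ω → ℝ) (Xlim : Ω → ℝ)
    (hXmeas : ∀ n, Measurable (X n)) (hXlimMeas : Measurable Xlim)
    (hXnonneg : ∀ n ω, 0 ≤ X n ω) (hXlimNonneg : ∀ ω, 0 ≤ Xlim ω)
    (hconv : ∀ f : ℝ →ᵇ ℝ,
      Tendsto (fun n => ∫ ω, f (X n ω) ∂μ) atTop (𝓝 (∫ ω, f (Xlim ω) ∂μ)))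
    (h2pos : 0 < ∫ ω, Xlim ω ^ 2 ∂μ)
    (h2int : Integrable (fun ω => Xlim ω ^ 2) μ)
    (h3inf : ∫⁻ ω, ENNReal.ofReal (Xlim ω ^ 3) ∂μ = ⊤)
    (hn2int : ∀ n, Integrable (fun ω => X n ω ^ 2) μ)
    (h2conv : Tendsto (fun n => ∫ ω, X n ω ^ 2 ∂μ) atTop (𝓝 (∫ ω, Xlim ω ^ 2 ∂μ)))
    (m : ℕ → ℕ) (hmono : Monotone m) (hmtop : Tendsto m atTop atTop)
    (Y : ℕ → ℕ → Ω → ℝ)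
    (hYindep : ∀ n, iIndepFun
      (fun i : Fin (m n) => Y n i) μ)
    (hYdist : ∀ n i, i < m n → μ.map (Y n i) = μ.map (X n)) :
    ∀ ε > (0 : ℝ), Tendsto (fun n : ℕ =>
      μ {ω | ε * (∑ j ∈ Finset.range (m n), Y n j ω ^ 3) <
        (∑ j ∈ Finset.range (m n), ∑ k ∈ Finset.range j, Y n j ω ^ 3 * Y n k ω ^ 3)
          / (m n : ℝ) ^ 3}) atTop (𝓝 0) := by
  intro ε hε
  -- uniform bound on second moments
  obtain ⟨C, hC⟩ := h2conv.bddAbove_range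
  have hCb : ∀ n, ∫ ω, X n ω ^ 2 ∂μ ≤ C := fun n => hC ⟨n, rfl⟩
  have hC0 : 0 ≤ C :=
    le_trans (integral_nonneg fun ω => by positivity) (hCb 0)
  -- Y's are a.e. measurable
  have hYae : ∀ n j, j < m n → AEMeasurable (Y n j) μ := by
    intro n j hj
    by_contra h
    have h0 : μ.map (Y n j) = 0 := Measure.map_of_not_aemeasurable h
    rw [hYdist n j hj] at h0
    have h1 : (μ.map (X n)) Set.univ = 0 := by rw [h0]; simp
    rw [Measure.map_apply (hXmeas n) MeasurableSet.univ] at h1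
    simp at h1
  -- tail bound
  have htail : ∀ n j, j < m n → ∀ t : ℝ, 0 < t →
      μ {ω | t ≤ Y n j ω} ≤ ENNReal.ofReal (C / t ^ 2) := by
    intro n j hj t ht
    have h1 : μ {ω | t ≤ Y n j ω} = μ {ω | t ≤ X n ω} := by
      have e1 : {ω | t ≤ Y n j ω} = Y n j ⁻¹' Set.Ici t := rfl
      have e2 : {ω | t ≤ X n ω} = X n ⁻¹' Set.Ici t := rfl
      rw [e1, e2, ← Measure.map_apply_of_aemeasurable (hYae n j hj) measurableSet_Ici,
        hYdist n j hj, Measure.map_apply (hXmeas n) measurableSet_Ici]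
    rw [h1]
    have hsub : {ω | t ≤ X n ω} ⊆ {ω | t ^ 2 ≤ X n ω ^ 2} := fun ω hω =>
      pow_le_pow_left₀ ht.le hω 2
    refine le_trans (measure_mono hsub) ?_
    have hm := mul_meas_ge_le_integral_of_nonneg (μ := μ) (f := fun ω => X n ω ^ 2)
      (Filter.Eventually.of_forall fun ω => by positivity) (hn2int n) (t ^ 2)
    have ht2 : (0:ℝ) < t ^ 2 := by positivity
    have hle : (μ {ω | t ^ 2 ≤ X n ω ^ 2}).toReal ≤ C / t ^ 2 := by
      rw [le_div_iff₀ ht2]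
      calc (μ {ω | t ^ 2 ≤ X n ω ^ 2}).toReal * t ^ 2
          = t ^ 2 * (μ {ω | t ^ 2 ≤ X n ω ^ 2}).toReal := by ring
        _ ≤ ∫ ω, X n ω ^ 2 ∂μ := hm
        _ ≤ C := hCb n
    calc μ {ω | t ^ 2 ≤ X n ω ^ 2}
        = ENNReal.ofReal ((μ {ω | t ^ 2 ≤ X n ω ^ 2}).toReal) :=
          (ENNReal.ofReal_toReal (measure_ne_top μ _)).symm
      _ ≤ ENNReal.ofReal (C / t ^ 2) := ENNReal.ofReal_le_ofReal hle
  -- Y's are a.s. nonnegative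
  have hneg : ∀ n j, j < m n → μ {ω | Y n j ω < 0} = 0 := by
    intro n j hj
    have e1 : {ω | Y n j ω < 0} = Y n j ⁻¹' Set.Iio 0 := rfl
    rw [e1, ← Measure.map_apply_of_aemeasurable (hYae n j hj) measurableSet_Iio,
      hYdist n j hj, Measure.map_apply (hXmeas n) measurableSet_Iio]
    have e2 : X n ⁻¹' Set.Iio 0 = ∅ := by
      ext ω
      simp [not_lt.2 (hXnonneg n ω)]
    rw [e2, measure_empty]
  -- main eventual bound
  have hmain : ∀ᶠ n in atTop,
      μ {ω | ε * (∑ j ∈ Finset.range (m n), Y n j ω ^ 3) <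
        (∑ j ∈ Finset.range (m n), ∑ k ∈ Finset.range j, Y n j ω ^ 3 * Y n k ω ^ 3)
          / (m n : ℝ) ^ 3}
        ≤ ENNReal.ofReal (C * (m n : ℝ) ^ (-(1:ℝ)/7)) := by
    have hm' : Tendsto (fun n => (m n : ℝ)) atTop atTop :=
      tendsto_natCast_atTop_atTop.comp hmtop
    have h1 : ∀ᶠ n in atTop, 1 ≤ m n := hmtop.eventually_ge_atTop 1
    have h2 : ∀ᶠ n in atTop, (m n : ℝ) ^ (-(2:ℝ)/7) ≤ ε := by
      have h0 := (tendsto_rpow_neg_atTop (by norm_num : (0:ℝ) < 2/7)).comp hm'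
      have h0' : Tendsto (fun n => (m n : ℝ) ^ (-(2:ℝ)/7)) atTop (𝓝 0) := by
        simpa [Function.comp_def, neg_div] using h0
      exact (h0'.eventually_lt_const hε).mono fun n h => h.le
    filter_upwards [h1, h2] with n hn1 hn2
    have mpos : (0:ℝ) < (m n : ℝ) := by exact_mod_cast hn1
    set t : ℝ := (m n : ℝ) ^ ((4:ℝ)/7) with htdef
    have tpos : 0 < t := Real.rpow_pos_of_pos mpos _
    have ht2 : t ^ 2 = (m n : ℝ) ^ ((8:ℝ)/7) := by
      rw [htdef, ← Real.rpow_natCast ((m n : ℝ) ^ ((4:ℝ)/7)) 2, ← Real.rpow_mul mpos.le]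
      norm_num
    have ht3 : t ^ 3 = (m n : ℝ) ^ ((12:ℝ)/7) := by
      rw [htdef, ← Real.rpow_natCast ((m n : ℝ) ^ ((4:ℝ)/7)) 3, ← Real.rpow_mul mpos.le]
      norm_num
    have ht3' : t ^ 3 ≤ ε * (m n : ℝ) ^ 2 := by
      have e1 : t ^ 3 = (m n : ℝ) ^ (-(2:ℝ)/7) * (m n : ℝ) ^ 2 := by
        rw [ht3, ← Real.rpow_natCast ((m n : ℝ)) 2, ← Real.rpow_add mpos]
        norm_num
      rw [e1]
      exact mul_le_mul_of_nonneg_right hn2 (by positivity)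
    -- inclusion into bad sets
    have hsub : {ω | ε * (∑ j ∈ Finset.range (m n), Y n j ω ^ 3) <
        (∑ j ∈ Finset.range (m n), ∑ k ∈ Finset.range j, Y n j ω ^ 3 * Y n k ω ^ 3)
          / (m n : ℝ) ^ 3} ⊆
        ⋃ j ∈ Finset.range (m n), ({ω | t ≤ Y n j ω} ∪ {ω | Y n j ω < 0}) := by
      intro ω hω
      by_contra hmem
      simp only [Set.mem_iUnion, Set.mem_union, Set.mem_setOf_eq, Finset.mem_range,
        not_exists, not_or, not_le, not_lt] at hmem
      rw [Set.mem_setOf_eq] at hω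
      set S : ℝ := ∑ j ∈ Finset.range (m n), Y n j ω ^ 3 with hSdef
      set P : ℝ := ∑ j ∈ Finset.range (m n), ∑ k ∈ Finset.range j,
        Y n j ω ^ 3 * Y n k ω ^ 3 with hPdef
      have hY0 : ∀ j ∈ Finset.range (m n), 0 ≤ Y n j ω ^ 3 := fun j hj =>
        pow_nonneg (hmem j (Finset.mem_range.1 hj)).2 3
      have hYb : ∀ j ∈ Finset.range (m n), Y n j ω ^ 3 ≤ t ^ 3 := fun j hj =>
        pow_le_pow_left₀ (hmem j (Finset.mem_range.1 hj)).2
          (hmem j (Finset.mem_range.1 hj)).1.le 3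
      have hS0 : 0 ≤ S := Finset.sum_nonneg hY0
      have hSb : S ≤ (m n : ℝ) * t ^ 3 := by
        calc S ≤ ∑ _j ∈ Finset.range (m n), t ^ 3 := Finset.sum_le_sum hYb
          _ = (m n : ℝ) * t ^ 3 := by
            rw [Finset.sum_const, Finset.card_range, nsmul_eq_mul]
      have hP : P ≤ S * S := by
        calc P ≤ ∑ j ∈ Finset.range (m n), Y n j ω ^ 3 * S := by
              apply Finset.sum_le_sum
              intro j hj
              rw [← Finset.mul_sum]
              refine mul_le_mul_of_nonneg_left ?_ (hY0 j hj)
              exact Finset.sum_le_sum_of_subset_of_nonneg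
                (Finset.range_subset_range.2 (le_of_lt (Finset.mem_range.1 hj)))
                (fun k hk _ => hY0 k hk)
          _ = S * S := by rw [← Finset.sum_mul]
      have hm3 : (0:ℝ) < (m n : ℝ) ^ 3 := by positivity
      have h4 : P ≤ S * ((m n : ℝ) * t ^ 3) :=
        le_trans hP (mul_le_mul_of_nonneg_left hSb hS0)
      have h5 : S * ((m n : ℝ) * t ^ 3) ≤ S * ((m n : ℝ) * (ε * (m n : ℝ) ^ 2)) := by
        refine mul_le_mul_of_nonneg_left ?_ hS0
        exact mul_le_mul_of_nonneg_left ht3' mpos.le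
      have h6 : ε * S * (m n : ℝ) ^ 3 < P := (lt_div_iff₀ hm3).1 hω
      have h7 : S * ((m n : ℝ) * (ε * (m n : ℝ) ^ 2)) = ε * S * (m n : ℝ) ^ 3 := by ring
      linarith
    calc μ {ω | ε * (∑ j ∈ Finset.range (m n), Y n j ω ^ 3) <
        (∑ j ∈ Finset.range (m n), ∑ k ∈ Finset.range j, Y n j ω ^ 3 * Y n k ω ^ 3)
          / (m n : ℝ) ^ 3}
        ≤ μ (⋃ j ∈ Finset.range (m n), ({ω | t ≤ Y n j ω} ∪ {ω | Y n j ω < 0})) :=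
          measure_mono hsub
      _ ≤ ∑ j ∈ Finset.range (m n), μ ({ω | t ≤ Y n j ω} ∪ {ω | Y n j ω < 0}) :=
          measure_biUnion_finset_le _ _
      _ ≤ ∑ _j ∈ Finset.range (m n), ENNReal.ofReal (C / t ^ 2) := by
          apply Finset.sum_le_sum
          intro j hj
          have hj' := Finset.mem_range.1 hj
          refine le_trans (measure_union_le _ _) ?_
          rw [hneg n j hj', add_zero]
          exact htail n j hj' t tpos
      _ = (m n : ℕ) • ENNReal.ofReal (C / t ^ 2) := by
          rw [Finset.sum_const, Finset.card_range]
      _ = ENNReal.ofReal ((m n : ℝ) * (C / t ^ 2)) := by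
          rw [nsmul_eq_mul, ← ENNReal.ofReal_natCast (m n),
            ← ENNReal.ofReal_mul (by positivity)]
      _ ≤ ENNReal.ofReal (C * (m n : ℝ) ^ (-(1:ℝ)/7)) := by
          apply ENNReal.ofReal_le_ofReal
          have e : (m n : ℝ) / (m n : ℝ) ^ ((8:ℝ)/7) = (m n : ℝ) ^ (-(1:ℝ)/7) := by
            rw [show (-(1:ℝ)/7) = 1 - (8:ℝ)/7 by norm_num, Real.rpow_sub mpos,
              Real.rpow_one]
          rw [ht2, ← e]
          have h8pos : (0:ℝ) < (m n : ℝ) ^ ((8:ℝ)/7) := Real.rpow_pos_of_pos mpos _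
          rw [div_eq_mul_inv, div_eq_mul_inv]
          ring_nf
          exact le_refl _
  -- upper bound tends to zero
  have hupper : Tendsto (fun n => ENNReal.ofReal (C * (m n : ℝ) ^ (-(1:ℝ)/7)))
      atTop (𝓝 0) := by
    have hm' : Tendsto (fun n => (m n : ℝ)) atTop atTop :=
      tendsto_natCast_atTop_atTop.comp hmtop
    have h0 := (tendsto_rpow_neg_atTop (by norm_num : (0:ℝ) < 1/7)).comp hm'
    have h0' : Tendsto (fun n => (m n : ℝ) ^ (-(1:ℝ)/7)) atTop (𝓝 0) := by
      simpa [Function.comp_def, neg_div] using h0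
    have h1 : Tendsto (fun n => C * (m n : ℝ) ^ (-(1:ℝ)/7)) atTop (𝓝 0) := by
      simpa using h0'.const_mul C
    have h2 := (ENNReal.continuous_ofReal.tendsto 0).comp h1
    simpa [Function.comp_def] using h2
  exact tendsto_of_tendsto_of_tendsto_of_le_of_le' tendsto_const_nhds hupper
    (Filter.Eventually.of_forall fun n => zero_le) hmain
end

section
/- Under the hypotheses of the previous setting (X_n ≥ 0 converging in distribution to X with 0 < E[X²] < ∞, E[X³] = ∞, E[X_n²] → E[X²]; m_n ↑ ∞; X_{n,1},…,X_{n,m_n} i.i.d. copies of X_n; S_n = Σ_j X_{n,j}³), one has m_n^{−3}·Σ_{{j,k,r}⊂[m_n]} X_{n,j}² X_{n,k}² X_{n,r}² = o_P(S_n). -/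
open MeasureTheory ProbabilityTheory Filter
open scoped Topology BoundedContinuousFunction ENNReal

private lemma cube_expand (s : Finset ℕ) (a : ℕ → ℝ) :
    (∑ j ∈ s, a j) ^ 3 = ∑ j ∈ s, ∑ k ∈ s, ∑ r ∈ s, a j * a k * a r := by
  rw [pow_succ, pow_two, Finset.sum_mul_sum, Finset.sum_mul]
  refine Finset.sum_congr rfl fun j _ => ?_
  rw [Finset.sum_mul]
  refine Finset.sum_congr rfl fun k _ => ?_
  rw [Finset.mul_sum]

private lemma triple_sum_le {m : ℕ} (a : ℕ → ℝ) (ha : ∀ j, 0 ≤ a j) :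
    ∑ j ∈ Finset.range m, ∑ k ∈ Finset.range j, ∑ r ∈ Finset.range k, a j * a k * a r
      ≤ (∑ j ∈ Finset.range m, a j) ^ 3 := by
  rw [cube_expand]
  refine Finset.sum_le_sum fun j hj => ?_
  have hjm : j ≤ m := (Finset.mem_range.mp hj).le
  calc ∑ k ∈ Finset.range j, ∑ r ∈ Finset.range k, a j * a k * a r
      ≤ ∑ k ∈ Finset.range j, ∑ r ∈ Finset.range m, a j * a k * a r := by
        refine Finset.sum_le_sum fun k hk => ?_
        refine Finset.sum_le_sum_of_subset_of_nonneg
          (Finset.range_subset_range.mpr ((Finset.mem_range.mp hk).le.trans hjm)) fun r _ _ => ?_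
        have := ha j; have := ha k; have := ha r; positivity
    _ ≤ ∑ k ∈ Finset.range m, ∑ r ∈ Finset.range m, a j * a k * a r := by
        refine Finset.sum_le_sum_of_subset_of_nonneg (Finset.range_subset_range.mpr hjm)
          fun k _ _ => Finset.sum_nonneg fun r _ => ?_
        have := ha j; have := ha k; have := ha r; positivity

noncomputable def tcf (M : ℕ) : ℝ →ᵇ ℝ :=
  BoundedContinuousFunction.ofNormedAddCommGroup
    (fun x => (min (max x 0) (M : ℝ)) ^ 3)
    (by continuity)
    ((M : ℝ) ^ 3)
    (fun x => by
      have h0 : (0:ℝ) ≤ min (max x 0) (M : ℝ) := le_min (le_max_right _ _) (Nat.cast_nonneg M)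
      rw [Real.norm_eq_abs, abs_of_nonneg (by positivity)]
      exact pow_le_pow_left₀ h0 (min_le_right _ _) 3)

lemma tcf_apply (M : ℕ) (x : ℝ) : tcf M x = (min (max x 0) (M : ℝ)) ^ 3 := rfl

lemma tcf_nonneg (M : ℕ) (x : ℝ) : 0 ≤ tcf M x := by
  rw [tcf_apply]
  have h0 : (0:ℝ) ≤ min (max x 0) (M : ℝ) := le_min (le_max_right _ _) (Nat.cast_nonneg M)
  positivity

lemma tcf_le (M : ℕ) (x : ℝ) : tcf M x ≤ (M : ℝ) ^ 3 := by
  rw [tcf_apply]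
  have h0 : (0:ℝ) ≤ min (max x 0) (M : ℝ) := le_min (le_max_right _ _) (Nat.cast_nonneg M)
  exact pow_le_pow_left₀ h0 (min_le_right _ _) 3

lemma tcf_le_cube (M : ℕ) {x : ℝ} (hx : 0 ≤ x) : tcf M x ≤ x ^ 3 := by
  rw [tcf_apply]
  have h0 : (0:ℝ) ≤ min (max x 0) (M : ℝ) := le_min (le_max_right _ _) (Nat.cast_nonneg M)
  refine pow_le_pow_left₀ h0 ?_ 3
  exact (min_le_left _ _).trans (by rw [max_eq_left hx])

lemma tcf_mono {M M' : ℕ} (h : M ≤ M') (x : ℝ) : tcf M x ≤ tcf M' x := by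
  rw [tcf_apply, tcf_apply]
  have h0 : (0:ℝ) ≤ min (max x 0) (M : ℝ) := le_min (le_max_right _ _) (Nat.cast_nonneg M)
  exact pow_le_pow_left₀ h0 (min_le_min le_rfl (Nat.cast_le.mpr h)) 3

lemma tcf_tendsto {x : ℝ} (hx : 0 ≤ x) :
    Tendsto (fun M : ℕ => ENNReal.ofReal (tcf M x)) atTop (𝓝 (ENNReal.ofReal (x ^ 3))) := by
  refine tendsto_const_nhds.congr' ?_
  filter_upwards [eventually_ge_atTop ⌈x⌉₊] with M hM
  rw [tcf_apply, max_eq_left hx, min_eq_left (le_trans (Nat.le_ceil x) (Nat.cast_le.mpr hM))]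

set_option maxHeartbeats 2000000 in
theorem stmt10 {Ω : Type*} [MeasurableSpace Ω] (μ : Measure Ω) [IsProbabilityMeasure μ]
    (X : ℕ → Ω → ℝ) (Xlim : Ω → ℝ)
    (hXmeas : ∀ n, Measurable (X n)) (hXlimMeas : Measurable Xlim)
    (hXnonneg : ∀ n ω, 0 ≤ X n ω) (hXlimNonneg : ∀ ω, 0 ≤ Xlim ω)
    (hconv : ∀ f : ℝ →ᵇ ℝ,
      Tendsto (fun n => ∫ ω, f (X n ω) ∂μ) atTop (𝓝 (∫ ω, f (Xlim ω) ∂μ)))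
    (h2pos : 0 < ∫ ω, Xlim ω ^ 2 ∂μ)
    (h2int : Integrable (fun ω => Xlim ω ^ 2) μ)
    (h3inf : ∫⁻ ω, ENNReal.ofReal (Xlim ω ^ 3) ∂μ = ⊤)
    (hn2int : ∀ n, Integrable (fun ω => X n ω ^ 2) μ)
    (h2conv : Tendsto (fun n => ∫ ω, X n ω ^ 2 ∂μ) atTop (𝓝 (∫ ω, Xlim ω ^ 2 ∂μ)))
    (m : ℕ → ℕ) (hmono : Monotone m) (hmtop : Tendsto m atTop atTop)
    (Y : ℕ → ℕ → Ω → ℝ)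
    (hYindep : ∀ n, iIndepFun
      (fun i : Fin (m n) => Y n i) μ)
    (hYdist : ∀ n i, i < m n → μ.map (Y n i) = μ.map (X n)) :
    ∀ ε > (0 : ℝ), Tendsto (fun n : ℕ =>
      μ {ω | ε * (∑ j ∈ Finset.range (m n), Y n j ω ^ 3) <
        (∑ j ∈ Finset.range (m n), ∑ k ∈ Finset.range j, ∑ r ∈ Finset.range k,
            Y n j ω ^ 2 * Y n k ω ^ 2 * Y n r ω ^ 2)
          / (m n : ℝ) ^ 3}) atTop (𝓝 0) := by
  intro ε hε
  set L : ℝ := ∫ ω, Xlim ω ^ 2 ∂μ with hLdef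
  -- a.e.-measurability of the Y's
  have hYae : ∀ n j, j < m n → AEMeasurable (Y n j) μ := by
    intro n j hj
    by_contra h
    have h0 : μ.map (Y n j) = 0 := Measure.map_of_not_aemeasurable h
    have h1 : μ.map (X n) Set.univ = 1 := by
      rw [Measure.map_apply (hXmeas n) MeasurableSet.univ]; simp
    rw [← hYdist n j hj, h0] at h1
    simp at h1
  -- a.e. nonnegativity of the Y's
  have hYnonneg : ∀ n j, j < m n → ∀ᵐ ω ∂μ, 0 ≤ Y n j ω := by
    intro n j hj
    have hmap : μ.map (Y n j) (Set.Iio 0) = 0 := by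
      rw [hYdist n j hj, Measure.map_apply (hXmeas n) measurableSet_Iio]
      have : X n ⁻¹' Set.Iio 0 = ∅ :=
        Set.eq_empty_of_forall_notMem fun ω hω => absurd (hXnonneg n ω) (not_le.mpr hω)
      rw [this, measure_empty]
    rw [Measure.map_apply_of_aemeasurable (hYae n j hj) measurableSet_Iio] at hmap
    rw [ae_iff]
    convert hmap using 2
    ext ω
    simp [Set.mem_preimage, not_le]
  -- transfer of integrals along the identical distribution
  have hmapT : ∀ n j, j < m n → ∀ g : ℝ → ℝ, Measurable g →
      ∫ ω, g (Y n j ω) ∂μ = ∫ ω, g (X n ω) ∂μ := by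
    intro n j hj g hg
    rw [← integral_map (hYae n j hj) hg.aestronglyMeasurable, hYdist n j hj,
      integral_map (hXmeas n).aemeasurable hg.aestronglyMeasurable]
  have hintT : ∀ n j, j < m n → ∀ g : ℝ → ℝ, Measurable g →
      Integrable (fun ω => g (X n ω)) μ → Integrable (fun ω => g (Y n j ω)) μ := by
    intro n j hj g hg hXint
    have h1 : Integrable g (μ.map (X n)) :=
      (integrable_map_measure hg.aestronglyMeasurable (hXmeas n).aemeasurable).mpr hXint
    have h2 : Integrable g (μ.map (Y n j)) := by rw [hYdist n j hj]; exact h1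
    exact
      (integrable_map_measure hg.aestronglyMeasurable (hYae n j hj)).mp h2
  -- choose a truncation level M with ∫ tcf M (Xlim) ≥ 1
  obtain ⟨M, hM1⟩ : ∃ M : ℕ, 1 ≤ ∫ ω, tcf M (Xlim ω) ∂μ := by
    have hmeasM : ∀ M : ℕ, AEMeasurable (fun ω => ENNReal.ofReal (tcf M (Xlim ω))) μ :=
      fun M => (ENNReal.measurable_ofReal.comp
        ((tcf M).continuous.measurable.comp hXlimMeas)).aemeasurable
    have hmono' : ∀ᵐ ω ∂μ, Monotone fun M : ℕ => ENNReal.ofReal (tcf M (Xlim ω)) :=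
      ae_of_all _ fun ω M M' h => ENNReal.ofReal_le_ofReal (tcf_mono h _)
    have htend : ∀ᵐ ω ∂μ, Tendsto (fun M : ℕ => ENNReal.ofReal (tcf M (Xlim ω))) atTop
        (𝓝 (ENNReal.ofReal (Xlim ω ^ 3))) :=
      ae_of_all _ fun ω => tcf_tendsto (hXlimNonneg ω)
    have hlim := lintegral_tendsto_of_tendsto_of_monotone hmeasM hmono' htend
    rw [h3inf] at hlim
    have hev : ∀ᶠ M : ℕ in atTop, (1 : ℝ≥0∞) ≤ ∫⁻ ω, ENNReal.ofReal (tcf M (Xlim ω)) ∂μ :=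
      hlim.eventually (eventually_ge_nhds (by norm_num))
    obtain ⟨M, hM⟩ := hev.exists
    refine ⟨M, ?_⟩
    have hfin : (∫⁻ ω, ENNReal.ofReal (tcf M (Xlim ω)) ∂μ) ≠ ⊤ := by
      refine ne_top_of_le_ne_top (b := ENNReal.ofReal ((M : ℝ) ^ 3)) (by simp) ?_
      calc ∫⁻ ω, ENNReal.ofReal (tcf M (Xlim ω)) ∂μ
          ≤ ∫⁻ _, ENNReal.ofReal ((M : ℝ) ^ 3) ∂μ :=
            lintegral_mono fun ω => ENNReal.ofReal_le_ofReal (tcf_le M _)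
        _ = ENNReal.ofReal ((M : ℝ) ^ 3) := by simp
    have hint : Integrable (fun ω => tcf M (Xlim ω)) μ := by
      refine Integrable.mono' (integrable_const ((M : ℝ) ^ 3))
        ((tcf M).continuous.measurable.comp hXlimMeas).aestronglyMeasurable
        (ae_of_all _ fun ω => ?_)
      rw [Real.norm_eq_abs, abs_of_nonneg (tcf_nonneg M _)]
      exact tcf_le M _
    rw [integral_eq_lintegral_of_nonneg_ae (ae_of_all _ fun ω => tcf_nonneg M _)
      hint.aestronglyMeasurable]
    calc (1 : ℝ) = (1 : ℝ≥0∞).toReal := by simp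
      _ ≤ _ := ENNReal.toReal_mono hfin hM
  set c : ℝ := ∫ ω, tcf M (Xlim ω) ∂μ with hcdef
  set μn : ℕ → ℝ := fun n => ∫ ω, tcf M (X n ω) ∂μ with hμndef
  have hμnconv : Tendsto μn atTop (𝓝 c) := hconv (tcf M)
  have E2 : ∀ᶠ n in atTop, (1 : ℝ) / 2 ≤ μn n :=
    hμnconv.eventually (eventually_ge_nhds (by linarith))
  -- main argument
  rw [ENNReal.tendsto_atTop_zero]
  intro δ hδ
  obtain ⟨r, hr0, hrδ⟩ : ∃ r : ℝ, 0 < r ∧ ENNReal.ofReal r ≤ δ := by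
    rcases eq_or_ne δ ⊤ with h | h
    · exact ⟨1, one_pos, by simp [h]⟩
    · exact ⟨δ.toReal, ENNReal.toReal_pos hδ.ne' h, by rw [ENNReal.ofReal_toReal h]⟩
  suffices H : ∀ᶠ n in atTop, μ {ω | ε * (∑ j ∈ Finset.range (m n), Y n j ω ^ 3) <
        (∑ j ∈ Finset.range (m n), ∑ k ∈ Finset.range j, ∑ r ∈ Finset.range k,
            Y n j ω ^ 2 * Y n k ω ^ 2 * Y n r ω ^ 2) / (m n : ℝ) ^ 3}
      ≤ ENNReal.ofReal r by
    obtain ⟨N, hN⟩ := eventually_atTop.mp H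
    exact ⟨N, fun n hn => (hN n hn).trans hrδ⟩
  have hL1 : 0 < L + 1 := by linarith
  set B : ℝ := 2 * (L + 1) / r with hBdef
  have hB : 0 < B := by positivity
  set K : ℝ := B ^ 3 / ε with hKdef
  have hK : 0 < K := by positivity
  have E1 : ∀ᶠ n in atTop, ∫ ω, X n ω ^ 2 ∂μ ≤ L + 1 :=
    h2conv.eventually (eventually_le_nhds (lt_add_one L))
  obtain ⟨N₀, hN₀⟩ := exists_nat_ge (max (4 * K) (32 * (M : ℝ) ^ 6 / r))
  have E3 : ∀ᶠ n in atTop, N₀ + 1 ≤ m n := hmtop.eventually (eventually_ge_atTop (N₀ + 1))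
  filter_upwards [E1, E2, E3] with n h1 h2 h3
  -- fixed n from now on
  have hmm1 : 1 ≤ m n := le_trans (Nat.le_add_left 1 N₀) h3
  have hmmR : (0:ℝ) < (m n : ℝ) := by exact_mod_cast hmm1
  have hmN : (N₀ : ℝ) ≤ (m n : ℝ) := by exact_mod_cast le_trans (Nat.le_succ N₀) h3
  have h4K : 4 * K ≤ (m n : ℝ) := le_trans (le_trans (le_max_left _ _) hN₀) hmN
  have h32 : 32 * (M : ℝ) ^ 6 / r ≤ (m n : ℝ) :=
    le_trans (le_trans (le_max_right _ _) hN₀) hmN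
  have hsq : ∀ j, j < m n → Integrable (fun ω => Y n j ω ^ 2) μ := fun j hj =>
    hintT n j hj (fun x => x ^ 2) (continuous_pow 2).measurable (hn2int n)
  have hsqmean : ∀ j, j < m n → ∫ ω, Y n j ω ^ 2 ∂μ = ∫ ω, X n ω ^ 2 ∂μ := fun j hj =>
    hmapT n j hj (fun x => x ^ 2) (continuous_pow 2).measurable
  set A : Ω → ℝ := fun ω => ∑ j ∈ Finset.range (m n), Y n j ω ^ 2 with hAdef
  have hAint : Integrable A μ :=
    integrable_finset_sum _ fun j hj => hsq j (Finset.mem_range.mp hj)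
  have hAmean : ∫ ω, A ω ∂μ = (m n : ℝ) * ∫ ω, X n ω ^ 2 ∂μ := by
    rw [hAdef]
    rw [integral_finset_sum _ fun j hj => hsq j (Finset.mem_range.mp hj),
      Finset.sum_congr rfl fun j hj => hsqmean j (Finset.mem_range.mp hj),
      Finset.sum_const, Finset.card_range, nsmul_eq_mul]
  -- Markov piece
  have hMarkov : μ {ω | (m n : ℝ) * B ≤ A ω} ≤ ENNReal.ofReal (r / 2) := by
    have hmb : 0 < (m n : ℝ) * B := by positivity
    have hmark := mul_meas_ge_le_integral_of_nonneg
      (ae_of_all μ fun ω => Finset.sum_nonneg fun j _ => sq_nonneg (Y n j ω)) hAint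
      ((m n : ℝ) * B)
    rw [hAmean] at hmark
    have htoReal : (μ {ω | (m n : ℝ) * B ≤ A ω}).toReal ≤ r / 2 := by
      have h5 : (μ {ω | (m n : ℝ) * B ≤ A ω}).toReal
          ≤ ((m n : ℝ) * (L + 1)) / ((m n : ℝ) * B) := by
        rw [le_div_iff₀ hmb]
        calc (μ {ω | (m n : ℝ) * B ≤ A ω}).toReal * ((m n : ℝ) * B)
            = (m n : ℝ) * B * (μ {ω | (m n : ℝ) * B ≤ A ω}).toReal := by ring
          _ ≤ (m n : ℝ) * ∫ ω, X n ω ^ 2 ∂μ := hmark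
          _ ≤ (m n : ℝ) * (L + 1) := mul_le_mul_of_nonneg_left h1 hmmR.le
      have h6 : ((m n : ℝ) * (L + 1)) / ((m n : ℝ) * B) = (L + 1) / B :=
        mul_div_mul_left _ _ (ne_of_gt hmmR)
      have h7 : (L + 1) / B = r / 2 := by
        rw [hBdef]; field_simp
      linarith [h5, h6 ▸ h5]
    exact (ENNReal.le_ofReal_iff_toReal_le (measure_ne_top μ _) (by positivity)).mpr htoReal
  -- Chebyshev piece
  set F : ℕ → Ω → ℝ := fun j ω => tcf M (Y n j ω) with hFdef
  have hFaesm : ∀ j, j < m n → AEStronglyMeasurable (F j) μ := fun j hj =>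
    ((tcf M).continuous.measurable.comp_aemeasurable (hYae n j hj)).aestronglyMeasurable
  have hFmem : ∀ j, j < m n → MemLp (F j) 2 μ := fun j hj =>
    MemLp.of_bound (hFaesm j hj) ((M : ℝ) ^ 3) (ae_of_all _ fun ω => by
      rw [Real.norm_eq_abs, abs_of_nonneg (tcf_nonneg _ _)]; exact tcf_le _ _)
  have hpair : Set.Pairwise ↑(Finset.range (m n)) fun j k => IndepFun (F j) (F k) μ := by
    intro j hj k hk hjk
    have hj' : j < m n := by simpa using hj
    have hk' : k < m n := by simpa using hk
    have hY : IndepFun (Y n j) (Y n k) μ := by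
      have := (hYindep n).indepFun (i := ⟨j, hj'⟩) (j := ⟨k, hk'⟩)
        (by simp [Fin.ext_iff]; exact hjk)
      simpa using this
    exact hY.comp (tcf M).continuous.measurable (tcf M).continuous.measurable
  set T : Ω → ℝ := ∑ j ∈ Finset.range (m n), F j with hTdef
  have hTmem : MemLp T 2 μ :=
    memLp_finset_sum' _ fun j hj => hFmem j (Finset.mem_range.mp hj)
  have hvar : variance T μ ≤ (m n : ℝ) * (M : ℝ) ^ 6 := by
    rw [hTdef, IndepFun.variance_sum (fun j hj => hFmem j (Finset.mem_range.mp hj)) hpair]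
    calc ∑ j ∈ Finset.range (m n), variance (F j) μ
        ≤ ∑ j ∈ Finset.range (m n), (M : ℝ) ^ 6 := by
          refine Finset.sum_le_sum fun j hj => ?_
          have hj' := Finset.mem_range.mp hj
          refine (variance_le_expectation_sq (hFaesm j hj')).trans ?_
          have hint2 : Integrable (F j ^ 2) μ := (hFmem j hj').integrable_sq
          calc μ[F j ^ 2] ≤ ∫ _ω, (M : ℝ) ^ 6 ∂μ := by
                refine integral_mono_ae hint2 (integrable_const _) (ae_of_all _ fun ω => ?_)
                show (F j ω) ^ 2 ≤ (M : ℝ) ^ 6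
                have h0 := tcf_nonneg M (Y n j ω)
                have hb := tcf_le M (Y n j ω)
                calc (F j ω) ^ 2 ≤ ((M : ℝ) ^ 3) ^ 2 := by
                      rw [hFdef]; nlinarith [h0, hb]
                  _ = (M : ℝ) ^ 6 := by ring
            _ = (M : ℝ) ^ 6 := by simp
      _ = (m n : ℝ) * (M : ℝ) ^ 6 := by
          rw [Finset.sum_const, Finset.card_range, nsmul_eq_mul]
  have hTmean : μ[T] = (m n : ℝ) * μn n := by
    have hstep : μ[T] = ∑ j ∈ Finset.range (m n), ∫ ω, F j ω ∂μ := by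
      rw [hTdef]
      simp only [Finset.sum_apply]
      exact integral_finset_sum _ fun j hj =>
        (hFmem j (Finset.mem_range.mp hj)).integrable one_le_two
    rw [hstep,
      Finset.sum_congr rfl fun j hj => hmapT n j (Finset.mem_range.mp hj) (tcf M)
        (tcf M).continuous.measurable,
      Finset.sum_const, Finset.card_range, nsmul_eq_mul]
  set c₀ : ℝ := (m n : ℝ) * μn n - K with hc₀def
  have hc₀ : (m n : ℝ) / 4 ≤ c₀ := by
    have hmul : (m n : ℝ) * (1 / 2) ≤ (m n : ℝ) * μn n :=
      mul_le_mul_of_nonneg_left h2 hmmR.le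
    rw [hc₀def]; linarith [h4K, hmul]
  have hc₀pos : 0 < c₀ := lt_of_lt_of_le (by positivity) hc₀
  have hcheb := meas_ge_le_variance_div_sq (μ := μ) hTmem hc₀pos
  have hchebbound : μ {ω | c₀ ≤ |T ω - μ[T]|} ≤ ENNReal.ofReal (r / 2) := by
    refine hcheb.trans (ENNReal.ofReal_le_ofReal ?_)
    have hq : variance T μ / c₀ ^ 2
        ≤ ((m n : ℝ) * (M : ℝ) ^ 6) / (((m n : ℝ) / 4) ^ 2) := by
      refine div_le_div₀ (by positivity) hvar (by positivity) ?_
      exact pow_le_pow_left₀ (by positivity) hc₀ 2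
    refine hq.trans ?_
    rw [div_le_iff₀ (by positivity)]
    have h32' : 32 * (M : ℝ) ^ 6 ≤ r * (m n : ℝ) := by
      rw [div_le_iff₀ hr0] at h32; linarith [h32]
    nlinarith [mul_le_mul_of_nonneg_left h32' hmmR.le, hmmR]
  -- a.e. nonnegativity event
  have hGae : ∀ᵐ ω ∂μ, ∀ j, j < m n → 0 ≤ Y n j ω := by
    rw [ae_all_iff]
    intro j
    by_cases hj : j < m n
    · exact (hYnonneg n j hj).mono fun ω h _ => h
    · exact ae_of_all _ fun ω h => absurd h hj
  -- inclusion of the bad set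
  show μ {ω | ε * (∑ j ∈ Finset.range (m n), Y n j ω ^ 3) <
      (∑ j ∈ Finset.range (m n), ∑ k ∈ Finset.range j, ∑ l ∈ Finset.range k,
        Y n j ω ^ 2 * Y n k ω ^ 2 * Y n l ω ^ 2) / (m n : ℝ) ^ 3} ≤ ENNReal.ofReal r
  have hsubset : {ω | ε * (∑ j ∈ Finset.range (m n), Y n j ω ^ 3) <
      (∑ j ∈ Finset.range (m n), ∑ k ∈ Finset.range j, ∑ l ∈ Finset.range k,
        Y n j ω ^ 2 * Y n k ω ^ 2 * Y n l ω ^ 2) / (m n : ℝ) ^ 3}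
      ⊆ ({ω | (m n : ℝ) * B ≤ A ω} ∪ {ω | c₀ ≤ |T ω - μ[T]|})
        ∪ {ω | ¬ ∀ j, j < m n → 0 ≤ Y n j ω} := by
    intro ω hbad
    simp only [Set.mem_setOf_eq] at hbad
    by_cases hP : ∀ j, j < m n → 0 ≤ Y n j ω
    swap
    · exact Or.inr hP
    refine Or.inl ?_
    by_contra hcon
    simp only [Set.mem_union, Set.mem_setOf_eq, not_or, not_le] at hcon
    obtain ⟨hAlt, hC⟩ := hcon
    rw [hTmean] at hC
    have hTω : T ω = ∑ j ∈ Finset.range (m n), tcf M (Y n j ω) := by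
      rw [hTdef]; simp [Finset.sum_apply, hFdef]
    have hTK : K < T ω := by
      have habs := abs_lt.mp hC
      rw [hc₀def] at habs
      linarith [habs.1]
    have hTS : T ω ≤ ∑ j ∈ Finset.range (m n), Y n j ω ^ 3 := by
      rw [hTω]
      exact Finset.sum_le_sum fun j hj => tcf_le_cube M (hP j (Finset.mem_range.mp hj))
    have hTrA : (∑ j ∈ Finset.range (m n), ∑ k ∈ Finset.range j, ∑ l ∈ Finset.range k,
        Y n j ω ^ 2 * Y n k ω ^ 2 * Y n l ω ^ 2) ≤ A ω ^ 3 :=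
      triple_sum_le (fun j => Y n j ω ^ 2) (fun j => sq_nonneg _)
    have hA3 : A ω ^ 3 < ((m n : ℝ) * B) ^ 3 :=
      pow_lt_pow_left₀ hAlt (Finset.sum_nonneg fun j _ => sq_nonneg _) (by norm_num)
    have h6 : (∑ j ∈ Finset.range (m n), ∑ k ∈ Finset.range j, ∑ l ∈ Finset.range k,
        Y n j ω ^ 2 * Y n k ω ^ 2 * Y n l ω ^ 2) / (m n : ℝ) ^ 3 < B ^ 3 := by
      rw [div_lt_iff₀ (by positivity)]
      calc (∑ j ∈ Finset.range (m n), ∑ k ∈ Finset.range j, ∑ l ∈ Finset.range k,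
            Y n j ω ^ 2 * Y n k ω ^ 2 * Y n l ω ^ 2) ≤ A ω ^ 3 := hTrA
        _ < ((m n : ℝ) * B) ^ 3 := hA3
        _ = B ^ 3 * (m n : ℝ) ^ 3 := by ring
    have h7 : B ^ 3 = ε * K := by rw [hKdef]; field_simp
    have h8 : ε * K < ε * T ω := mul_lt_mul_of_pos_left hTK hε
    have h9 : ε * T ω ≤ ε * ∑ j ∈ Finset.range (m n), Y n j ω ^ 3 :=
      mul_le_mul_of_nonneg_left hTS hε.le
    linarith [hbad, h6, h8, h9]
  calc μ {ω | ε * (∑ j ∈ Finset.range (m n), Y n j ω ^ 3) <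
      (∑ j ∈ Finset.range (m n), ∑ k ∈ Finset.range j, ∑ l ∈ Finset.range k,
        Y n j ω ^ 2 * Y n k ω ^ 2 * Y n l ω ^ 2) / (m n : ℝ) ^ 3}
      ≤ μ (({ω | (m n : ℝ) * B ≤ A ω} ∪ {ω | c₀ ≤ |T ω - μ[T]|})
        ∪ {ω | ¬ ∀ j, j < m n → 0 ≤ Y n j ω}) := measure_mono hsubset
    _ ≤ μ ({ω | (m n : ℝ) * B ≤ A ω} ∪ {ω | c₀ ≤ |T ω - μ[T]|})
        + μ {ω | ¬ ∀ j, j < m n → 0 ≤ Y n j ω} := measure_union_le _ _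
    _ ≤ (μ {ω | (m n : ℝ) * B ≤ A ω} + μ {ω | c₀ ≤ |T ω - μ[T]|}) + 0 := by
        refine add_le_add (measure_union_le _ _) ?_
        rw [← ae_iff.mp hGae]
    _ ≤ (ENNReal.ofReal (r / 2) + ENNReal.ofReal (r / 2)) + 0 := by
        exact add_le_add (add_le_add hMarkov hchebbound) le_rfl
    _ = ENNReal.ofReal r := by
        rw [add_zero, ← ENNReal.ofReal_add (by positivity) (by positivity)]
        norm_num
end

section
/- Under the same hypotheses (X_n ≥ 0 converging in distribution to X with 0 < E[X²] < ∞, E[X³] = ∞, E[X_n²] → E[X²]; m_n ↑ ∞; X_{n,1},…,X_{n,m_n} i.i.d. copies of X_n; S_n = Σ_j X_{n,j}³), one has m_n^{−1}·Σ_{{j,k}⊂[m_n]} X_{n,j}² X_{n,k}² = o_P(S_n). -/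
open MeasureTheory ProbabilityTheory Filter Finset
open scoped Topology BoundedContinuousFunction ENNReal NNReal

section helpers
variable {Ω : Type*} [MeasurableSpace Ω] {μ : Measure Ω} [IsProbabilityMeasure μ]
  {XX YY : Ω → ℝ}

private lemma aemeas_of_map_eq (hX : Measurable XX) (h : μ.map YY = μ.map XX) :
    AEMeasurable YY μ := by
  by_contra hc
  rw [Measure.map_of_not_aemeasurable hc] at h
  have h1 : (μ.map XX) Set.univ = 1 := by
    rw [Measure.map_apply hX MeasurableSet.univ]; simp
  rw [← h] at h1; simp at h1

private lemma ae_nonneg_of_map_eq (hX : Measurable XX) (hXnn : ∀ ω, 0 ≤ XX ω)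
    (h : μ.map YY = μ.map XX) : ∀ᵐ ω ∂μ, 0 ≤ YY ω := by
  have hY := aemeas_of_map_eq hX h
  have h0 : μ {ω | YY ω < 0} = 0 := by
    have he : {ω | YY ω < 0} = YY ⁻¹' (Set.Iio 0) := rfl
    rw [he, ← Measure.map_apply_of_aemeasurable hY measurableSet_Iio, h,
      Measure.map_apply hX measurableSet_Iio]
    have : XX ⁻¹' (Set.Iio 0) = ∅ := by
      ext ω; simp [not_lt.mpr (hXnn ω)]
    simp [this]
  rw [ae_iff]
  convert h0 using 2
  simp [not_le]

private lemma integral_transfer (hX : Measurable XX) (h : μ.map YY = μ.map XX)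
    {g : ℝ → ℝ} (hg : Measurable g) :
    ∫ ω, g (YY ω) ∂μ = ∫ ω, g (XX ω) ∂μ := by
  have hY := aemeas_of_map_eq hX h
  rw [← integral_map hY hg.aestronglyMeasurable, h,
    integral_map hX.aemeasurable hg.aestronglyMeasurable]

private lemma integrable_transfer (hX : Measurable XX) (h : μ.map YY = μ.map XX)
    {g : ℝ → ℝ} (hg : Measurable g) (hi : Integrable (fun ω => g (XX ω)) μ) :
    Integrable (fun ω => g (YY ω)) μ := by
  have hY := aemeas_of_map_eq hX h
  rw [← Function.comp_def, ← integrable_map_measure hg.aestronglyMeasurable hY, h,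
    integrable_map_measure hg.aestronglyMeasurable hX.aemeasurable]
  exact hi

end helpers

noncomputable def trunc (k : ℕ) : ℝ →ᵇ ℝ :=
  BoundedContinuousFunction.ofNormedAddCommGroup (fun t => min (max t 0 ^ 3) k)
    (by continuity) k (fun t => by
      rw [Real.norm_eq_abs, abs_le]
      constructor
      · have h1 : (0:ℝ) ≤ max t 0 ^ 3 := by positivity
        have h2 : (0:ℝ) ≤ (k:ℝ) := Nat.cast_nonneg k
        have := le_min h1 h2
        linarith
      · exact min_le_right _ _)

lemma trunc_apply (k : ℕ) (t : ℝ) : trunc k t = min (max t 0 ^ 3) k := rfl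

lemma trunc_nonneg (k : ℕ) (t : ℝ) : 0 ≤ trunc k t :=
  le_min (by positivity) (Nat.cast_nonneg k)

lemma trunc_le (k : ℕ) (t : ℝ) : trunc k t ≤ k := min_le_right _ _

lemma trunc_le_cube (k : ℕ) {t : ℝ} (ht : 0 ≤ t) : trunc k t ≤ t ^ 3 := by
  rw [trunc_apply, max_eq_left ht]
  exact min_le_left _ _

lemma trunc_measurable (k : ℕ) : Measurable (trunc k : ℝ → ℝ) :=
  (trunc k).continuous.measurable

lemma iSup_min_nat (a : ℝ≥0∞) : ⨆ k : ℕ, min a (k : ℝ≥0∞) = a := by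
  apply le_antisymm (iSup_le fun k => min_le_left _ _)
  rcases eq_or_ne a ⊤ with h | h
  · subst h
    calc (⊤:ℝ≥0∞) = ⨆ k : ℕ, (k:ℝ≥0∞) := ENNReal.iSup_natCast.symm
      _ ≤ ⨆ k : ℕ, min ⊤ (k:ℝ≥0∞) := by simp
  · obtain ⟨k, hk⟩ := ENNReal.exists_nat_gt h
    calc a = min a (k:ℝ≥0∞) := (min_eq_left hk.le).symm
      _ ≤ ⨆ k : ℕ, min a (k:ℝ≥0∞) := le_iSup (fun k : ℕ => min a (k:ℝ≥0∞)) k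

lemma ofReal_min' (a b : ℝ) :
    ENNReal.ofReal (min a b) = min (ENNReal.ofReal a) (ENNReal.ofReal b) := by
  rcases le_total a b with h | h
  · rw [min_eq_left h, min_eq_left (ENNReal.ofReal_le_ofReal h)]
  · rw [min_eq_right h, min_eq_right (ENNReal.ofReal_le_ofReal h)]

set_option maxHeartbeats 1000000 in
private lemma superlinear {Ω : Type*} [MeasurableSpace Ω] (μ : Measure Ω) [IsProbabilityMeasure μ]
    (X : ℕ → Ω → ℝ) (Xlim : Ω → ℝ)
    (hXmeas : ∀ n, Measurable (X n)) (hXlimMeas : Measurable Xlim)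
    (hXnonneg : ∀ n ω, 0 ≤ X n ω) (hXlimNonneg : ∀ ω, 0 ≤ Xlim ω)
    (hconv : ∀ f : ℝ →ᵇ ℝ,
      Tendsto (fun n => ∫ ω, f (X n ω) ∂μ) atTop (𝓝 (∫ ω, f (Xlim ω) ∂μ)))
    (h3inf : ∫⁻ ω, ENNReal.ofReal (Xlim ω ^ 3) ∂μ = ⊤)
    (m : ℕ → ℕ) (hmtop : Tendsto m atTop atTop)
    (Y : ℕ → ℕ → Ω → ℝ)
    (hYindep : ∀ n, iIndepFun
      (fun i : Fin (m n) => Y n i) μ)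
    (hYdist : ∀ n i, i < m n → μ.map (Y n i) = μ.map (X n))
    (C : ℝ) (hC : 0 < C) :
    Tendsto (fun n => μ {ω | (∑ j ∈ Finset.range (m n), Y n j ω ^ 3) < C * m n})
      atTop (𝓝 0) := by
  -- Step 1: choose the truncation level
  obtain ⟨k, hk⟩ : ∃ k : ℕ, 2 * C + 2 ≤ ∫ ω, trunc k (Xlim ω) ∂μ := by
    by_contra hcon
    push_neg at hcon
    have hint : ∀ k : ℕ, Integrable (fun ω => trunc k (Xlim ω)) μ := fun k =>
      (integrable_const (k:ℝ)).mono'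
        (((trunc_measurable k).comp hXlimMeas).aestronglyMeasurable)
        (ae_of_all _ fun ω => by
          rw [Real.norm_eq_abs, abs_of_nonneg (trunc_nonneg k _)]; exact trunc_le k _)
    have hle : ∀ k : ℕ, (∫⁻ ω, ENNReal.ofReal (trunc k (Xlim ω)) ∂μ)
        ≤ ENNReal.ofReal (2*C+2) := by
      intro k
      rw [← ofReal_integral_eq_lintegral_ofReal (hint k)
        (ae_of_all _ fun ω => trunc_nonneg k _)]
      exact ENNReal.ofReal_le_ofReal (hcon k).le
    have hmono : Monotone (fun k : ℕ => fun ω => ENNReal.ofReal (trunc k (Xlim ω))) := by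
      intro k l hkl ω
      apply ENNReal.ofReal_le_ofReal
      rw [trunc_apply, trunc_apply]
      exact min_le_min le_rfl (by exact_mod_cast hkl)
    have hsup : ∀ ω, (⨆ k : ℕ, ENNReal.ofReal (trunc k (Xlim ω)))
        = ENNReal.ofReal (Xlim ω ^ 3) := by
      intro ω
      have h1 : ∀ k : ℕ, ENNReal.ofReal (trunc k (Xlim ω))
          = min (ENNReal.ofReal (Xlim ω ^ 3)) (k : ℝ≥0∞) := by
        intro k
        rw [trunc_apply, max_eq_left (hXlimNonneg ω), ofReal_min', ENNReal.ofReal_natCast]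
      simp_rw [h1]
      exact iSup_min_nat _
    have hmc := lintegral_iSup (μ := μ)
      (fun k => (ENNReal.measurable_ofReal.comp ((trunc_measurable k).comp hXlimMeas)))
      hmono
    have hend : (∫⁻ ω, ENNReal.ofReal (Xlim ω ^ 3) ∂μ) ≤ ENNReal.ofReal (2*C+2) := by
      calc ∫⁻ ω, ENNReal.ofReal (Xlim ω ^ 3) ∂μ
          = ∫⁻ ω, ⨆ k : ℕ, ENNReal.ofReal (trunc k (Xlim ω)) ∂μ := by
            congr 1; ext ω; rw [hsup]
        _ = ⨆ k : ℕ, ∫⁻ ω, ENNReal.ofReal (trunc k (Xlim ω)) ∂μ := hmc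
        _ ≤ ENNReal.ofReal (2*C+2) := iSup_le hle
    rw [h3inf] at hend
    exact absurd (hend.trans_lt ENNReal.ofReal_lt_top) (lt_irrefl _)
  -- Step 2: eventual bounds
  have hgmeas : Measurable (trunc k : ℝ → ℝ) := trunc_measurable k
  have haev : ∀ᶠ n in atTop, 2 * C + 1 ≤ ∫ ω, trunc k (X n ω) ∂μ :=
    (hconv (trunc k)).eventually (eventually_ge_nhds (by linarith))
  have hmev : ∀ᶠ n in atTop, 1 ≤ m n := hmtop.eventually_ge_atTop 1
  have hbound : ∀ᶠ n in atTop,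
      μ {ω | (∑ j ∈ Finset.range (m n), Y n j ω ^ 3) < C * m n}
        ≤ ENNReal.ofReal ((k:ℝ)^2 / m n) := by
    filter_upwards [haev, hmev] with n ha hm
    set M := m n with hMdef
    set Z : ℕ → Ω → ℝ := fun j ω => trunc k (Y n j ω) with hZdef
    have hYae : ∀ j, j < M → AEMeasurable (Y n j) μ := fun j hj =>
      aemeas_of_map_eq (hXmeas n) (hYdist n j hj)
    have hZaesm : ∀ j, j < M → AEStronglyMeasurable (Z j) μ := fun j hj =>
      (hgmeas.comp_aemeasurable (hYae j hj)).aestronglyMeasurable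
    have hZmem : ∀ j, j < M → MemLp (Z j) 2 μ := fun j hj =>
      MemLp.of_bound (hZaesm j hj) (k:ℝ) (ae_of_all _ fun ω => by
        rw [Real.norm_eq_abs, abs_of_nonneg (trunc_nonneg _ _)]; exact trunc_le _ _)
    have hZint : ∀ j, j < M → ∫ ω, Z j ω ∂μ = ∫ ω, trunc k (X n ω) ∂μ := fun j hj =>
      integral_transfer (hXmeas n) (hYdist n j hj) hgmeas
    set W : Ω → ℝ := fun ω => ∑ j ∈ Finset.range M, Z j ω with hWdef
    set a := ∫ ω, trunc k (X n ω) ∂μ with hadef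
    have hEW : ∫ ω, W ω ∂μ = M * a := by
      rw [integral_finset_sum _
        (fun j hj => (hZmem j (Finset.mem_range.1 hj)).integrable one_le_two)]
      rw [Finset.sum_congr rfl (fun j hj => hZint j (Finset.mem_range.1 hj))]
      simp [nsmul_eq_mul]
    have hWmem : MemLp W 2 μ :=
      memLp_finset_sum _ (fun j hj => hZmem j (Finset.mem_range.1 hj))
    have hWeq : W = ∑ i : Fin M, (fun ω => Z (i:ℕ) ω) := by
      funext ω
      rw [Finset.sum_apply]
      exact (Fin.sum_univ_eq_sum_range (fun j => Z j ω) M).symm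
    have hvar : variance W μ ≤ M * (k:ℝ)^2 := by
      rw [hWeq, IndepFun.variance_sum
        (fun (i : Fin M) _ => hZmem i.1 i.isLt)
        (fun (i : Fin M) _ (j : Fin M) _ hij => ((hYindep n).indepFun hij).comp hgmeas hgmeas)]
      calc ∑ i : Fin M, variance (fun ω => Z (i:ℕ) ω) μ
          ≤ ∑ _i : Fin M, (k:ℝ)^2 := by
            apply Finset.sum_le_sum
            intro i _
            have h1 := variance_le_expectation_sq (μ := μ) (hZaesm i i.isLt)
            refine h1.trans ?_
            have h2 : ∀ ω, ((fun ω => Z (i:ℕ) ω) ^ 2) ω ≤ (k:ℝ)^2 := fun ω => by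
              have h3 := trunc_nonneg k (Y n i ω)
              have h4 := trunc_le k (Y n i ω)
              simp only [Pi.pow_apply]
              nlinarith
            calc ∫ ω, ((fun ω => Z (i:ℕ) ω) ^ 2) ω ∂μ
                ≤ ∫ _ω, (k:ℝ)^2 ∂μ :=
                  integral_mono (hZmem i i.isLt).integrable_sq (integrable_const _) h2
              _ = (k:ℝ)^2 := by simp
        _ = M * (k:ℝ)^2 := by simp [Finset.card_univ]
    have hMpos : (0:ℝ) < M := by exact_mod_cast hm
    have hM1 : (1:ℝ) ≤ M := by exact_mod_cast hm
    have hcheb := meas_ge_le_variance_div_sq (μ := μ) hWmem hMpos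
    have hle2 : ENNReal.ofReal (variance W μ / (M:ℝ)^2) ≤ ENNReal.ofReal ((k:ℝ)^2 / M) := by
      apply ENNReal.ofReal_le_ofReal
      rw [div_le_div_iff₀ (by positivity) hMpos]
      nlinarith [variance_nonneg W μ]
    have haeG : ∀ᵐ ω ∂μ, ∀ j, j < M → 0 ≤ Y n j ω := by
      rw [ae_all_iff]
      intro j
      by_cases hj : j < M
      · exact (ae_nonneg_of_map_eq (hXmeas n) (hXnonneg n) (hYdist n j hj)).mono
          (fun ω h _ => h)
      · exact ae_of_all _ (fun ω h => absurd h hj)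
    set G := {ω : Ω | ∀ j, j < M → 0 ≤ Y n j ω} with hGdef
    have hGc : μ Gᶜ = 0 := by
      have := ae_iff.1 haeG
      simpa [hGdef, Set.compl_setOf] using this
    have hsub : {ω | (∑ j ∈ Finset.range M, Y n j ω ^ 3) < C * M} ∩ G
        ⊆ {ω | (M:ℝ) ≤ |W ω - μ[W]|} := by
      rintro ω ⟨h1, h2⟩
      simp only [Set.mem_setOf_eq] at h1 ⊢
      have hWle : W ω ≤ ∑ j ∈ Finset.range M, Y n j ω ^ 3 :=
        Finset.sum_le_sum (fun j hj => trunc_le_cube k (h2 j (Finset.mem_range.1 hj)))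
      have hWlt : W ω < C * M := lt_of_le_of_lt hWle h1
      have habs : (M:ℝ) ≤ μ[W] - W ω := by
        rw [hEW]
        nlinarith [mul_le_mul_of_nonneg_left ha hMpos.le]
      calc (M:ℝ) ≤ μ[W] - W ω := habs
        _ ≤ |W ω - μ[W]| := by rw [abs_sub_comm]; exact le_abs_self _
    calc μ {ω | (∑ j ∈ Finset.range M, Y n j ω ^ 3) < C * ↑M}
        ≤ μ (({ω | (∑ j ∈ Finset.range M, Y n j ω ^ 3) < C * ↑M} ∩ G) ∪ Gᶜ) := by
          apply measure_mono
          intro ω hω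
          by_cases hg : ω ∈ G
          · exact Or.inl ⟨hω, hg⟩
          · exact Or.inr hg
      _ ≤ μ ({ω | (∑ j ∈ Finset.range M, Y n j ω ^ 3) < C * ↑M} ∩ G) + μ Gᶜ :=
          measure_union_le _ _
      _ = μ ({ω | (∑ j ∈ Finset.range M, Y n j ω ^ 3) < C * ↑M} ∩ G) := by
          rw [hGc, add_zero]
      _ ≤ μ {ω | (M:ℝ) ≤ |W ω - μ[W]|} := measure_mono hsub
      _ ≤ ENNReal.ofReal (variance W μ / (M:ℝ)^2) := hcheb
      _ ≤ ENNReal.ofReal ((k:ℝ)^2 / M) := hle2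
  have hzero : Tendsto (fun n => ENNReal.ofReal ((k:ℝ)^2 / m n)) atTop (𝓝 0) := by
    have h1 : Tendsto (fun n => ((m n : ℝ))) atTop atTop :=
      tendsto_natCast_atTop_atTop.comp hmtop
    have h2 : Tendsto (fun n => (k:ℝ)^2 / m n) atTop (𝓝 0) :=
      Tendsto.div_atTop tendsto_const_nhds h1
    have h3 := (ENNReal.continuous_ofReal.tendsto 0).comp h2
    simpa [Function.comp_def] using h3
  exact tendsto_of_tendsto_of_tendsto_of_le_of_le' tendsto_const_nhds hzero
    (Eventually.of_forall fun n => zero_le) hbound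
private lemma sq_le_aux {y K : ℝ} (hy : 0 ≤ y) (hK : 0 < K) :
    y ^ 2 ≤ K * y + y ^ 3 / K := by
  have h1 : 0 ≤ y * (y - K) ^ 2 := mul_nonneg hy (sq_nonneg _)
  have h2 : y ^ 3 / K * K = y ^ 3 := div_mul_cancel₀ _ hK.ne'
  nlinarith [mul_nonneg hK.le (sq_nonneg y), mul_nonneg hy (mul_pos hK hK).le]

private lemma alg_key {M : ℕ} (hM : 1 ≤ M) {y : ℕ → ℝ} (hy : ∀ j < M, 0 ≤ y j)
    {ε c : ℝ} (hε : 0 < ε) (hc : 0 < c)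
    (hev : ε * (∑ j ∈ range M, y j ^ 3) <
      (∑ j ∈ range M, ∑ k ∈ range j, y j ^ 2 * y k ^ 2) / M)
    (hs2 : (∑ j ∈ range M, y j ^ 2) ≤ c * M) :
    (∑ j ∈ range M, y j ^ 3) < 4 * c ^ 2 * (1 + c) / ε ^ 2 * M := by
  set K := 2 * c / ε with hKdef
  have hKpos : 0 < K := by positivity
  set s1 := ∑ j ∈ range M, y j with hs1d
  set s2 := ∑ j ∈ range M, y j ^ 2 with hs2d
  set s3 := ∑ j ∈ range M, y j ^ 3 with hs3d
  have hMpos : (0:ℝ) < M := by exact_mod_cast hM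
  have hs3nn : 0 ≤ s3 := Finset.sum_nonneg fun j hj => by
    have := hy j (mem_range.mp hj); positivity
  have hs2nn : 0 ≤ s2 := Finset.sum_nonneg fun j _ => sq_nonneg _
  have hs1nn : 0 ≤ s1 := Finset.sum_nonneg fun j hj => hy j (mem_range.mp hj)
  have hbound : ∀ k ∈ range M, y k ^ 2 ≤ K * y k + y k ^ 3 / K := fun k hk =>
    sq_le_aux (hy k (mem_range.mp hk)) hKpos
  have hinner : ∀ j ∈ range M, (∑ k ∈ range j, y j ^ 2 * y k ^ 2)
      ≤ y j ^ 2 * (K * s1 + s3 / K) := by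
    intro j hj
    rw [← Finset.mul_sum]
    apply mul_le_mul_of_nonneg_left _ (sq_nonneg _)
    calc ∑ k ∈ range j, y k ^ 2 ≤ ∑ k ∈ range M, y k ^ 2 :=
          Finset.sum_le_sum_of_subset_of_nonneg
            (Finset.range_subset_range.mpr (le_of_lt (mem_range.mp hj))) (fun k _ _ => sq_nonneg _)
      _ ≤ ∑ k ∈ range M, (K * y k + y k ^ 3 / K) := Finset.sum_le_sum hbound
      _ = K * s1 + s3 / K := by rw [Finset.sum_add_distrib, ← Finset.mul_sum, ← Finset.sum_div]
  have hT : (∑ j ∈ range M, ∑ k ∈ range j, y j ^ 2 * y k ^ 2) ≤ s2 * (K * s1 + s3 / K) :=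
    calc _ ≤ ∑ j ∈ range M, y j ^ 2 * (K * s1 + s3 / K) := Finset.sum_le_sum hinner
      _ = s2 * (K * s1 + s3 / K) := by rw [← Finset.sum_mul]
  have hs1le : s1 ≤ M + s2 := by
    have h : ∀ j ∈ range M, y j ≤ 1 + y j ^ 2 := fun j _ => by nlinarith [sq_nonneg (y j - 1)]
    calc s1 ≤ ∑ j ∈ range M, (1 + y j ^ 2) := Finset.sum_le_sum h
      _ = M + s2 := by rw [Finset.sum_add_distrib]; simp; rfl
  have hKs : 0 ≤ K * s1 + s3 / K := by positivity
  have hchain : ε * s3 * M < c * M * (K * (M + c * M) + s3 / K) := by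
    have h1 : ε * s3 * M < ∑ j ∈ range M, ∑ k ∈ range j, y j ^ 2 * y k ^ 2 := by
      rw [← lt_div_iff₀ hMpos] at *
      exact hev
    refine h1.trans_le (hT.trans ?_)
    have h2 : K * s1 + s3 / K ≤ K * (M + c * M) + s3 / K := by
      have : s1 ≤ M + c * M := hs1le.trans (by linarith)
      nlinarith
    exact mul_le_mul hs2 h2 hKs (by positivity)
  -- now finish
  rw [div_mul_eq_mul_div, lt_div_iff₀ (by positivity : (0:ℝ) < ε ^ 2)]
  have hmul := mul_lt_mul_of_pos_right hchain hε
  have h5 : c * ↑M * (K * (↑M + c * ↑M) + s3 / K) * ε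
      = 2 * c ^ 2 * (↑M + c * ↑M) * ↑M + ↑M * (s3 * ε ^ 2 / 2) := by
    rw [hKdef]; field_simp
  rw [h5] at hmul
  nlinarith [hmul, hMpos, hs3nn]

set_option maxHeartbeats 1000000 in
theorem stmt11 {Ω : Type*} [MeasurableSpace Ω] (μ : Measure Ω) [IsProbabilityMeasure μ]
    (X : ℕ → Ω → ℝ) (Xlim : Ω → ℝ)
    (hXmeas : ∀ n, Measurable (X n)) (hXlimMeas : Measurable Xlim)
    (hXnonneg : ∀ n ω, 0 ≤ X n ω) (hXlimNonneg : ∀ ω, 0 ≤ Xlim ω)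
    (hconv : ∀ f : ℝ →ᵇ ℝ,
      Tendsto (fun n => ∫ ω, f (X n ω) ∂μ) atTop (𝓝 (∫ ω, f (Xlim ω) ∂μ)))
    (h2pos : 0 < ∫ ω, Xlim ω ^ 2 ∂μ)
    (h2int : Integrable (fun ω => Xlim ω ^ 2) μ)
    (h3inf : ∫⁻ ω, ENNReal.ofReal (Xlim ω ^ 3) ∂μ = ⊤)
    (hn2int : ∀ n, Integrable (fun ω => X n ω ^ 2) μ)
    (h2conv : Tendsto (fun n => ∫ ω, X n ω ^ 2 ∂μ) atTop (𝓝 (∫ ω, Xlim ω ^ 2 ∂μ)))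
    (m : ℕ → ℕ) (hmono : Monotone m) (hmtop : Tendsto m atTop atTop)
    (Y : ℕ → ℕ → Ω → ℝ)
    (hYindep : ∀ n, iIndepFun
      (fun i : Fin (m n) => Y n i) μ)
    (hYdist : ∀ n i, i < m n → μ.map (Y n i) = μ.map (X n)) :
    ∀ ε > (0 : ℝ), Tendsto (fun n : ℕ =>
      μ {ω | ε * (∑ j ∈ Finset.range (m n), Y n j ω ^ 3) <
        (∑ j ∈ Finset.range (m n), ∑ k ∈ Finset.range j, Y n j ω ^ 2 * Y n k ω ^ 2)
          / (m n : ℝ)}) atTop (𝓝 0) := by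
  intro ε hε
  rw [ENNReal.tendsto_atTop_zero]
  intro δ hδ
  set E2 := ∫ ω, Xlim ω ^ 2 ∂μ with hE2
  set d := min δ 1 with hd
  have hdpos : 0 < d := lt_min hδ one_pos
  have hdne : d ≠ ⊤ := ((min_le_right δ 1).trans_lt ENNReal.one_lt_top).ne
  set r := d.toReal / 2 with hr
  have hrpos : 0 < r := by
    have h1 : 0 < d.toReal := ENNReal.toReal_pos hdpos.ne' hdne
    positivity
  have hE2pos : 0 < E2 := h2pos
  set c := (E2 + 1) / r with hcdef
  have hcpos : 0 < c := by positivity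
  set C := 4 * c ^ 2 * (1 + c) / ε ^ 2 with hCdef
  have hCpos : 0 < C := by positivity
  have hev1 : ∀ᶠ n in atTop, ∫ ω, X n ω ^ 2 ∂μ ≤ E2 + 1 :=
    h2conv.eventually (eventually_le_nhds (by linarith))
  have hev2 : ∀ᶠ n in atTop, 1 ≤ m n := hmtop.eventually_ge_atTop 1
  have hsupl := superlinear μ X Xlim hXmeas hXlimMeas hXnonneg hXlimNonneg hconv h3inf
    m hmtop Y hYindep hYdist C hCpos
  have hev3 : ∀ᶠ n in atTop,
      μ {ω | (∑ j ∈ Finset.range (m n), Y n j ω ^ 3) < C * m n} ≤ ENNReal.ofReal r :=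
    hsupl.eventually (eventually_le_nhds (ENNReal.ofReal_pos.2 hrpos))
  obtain ⟨N, hN⟩ := eventually_atTop.1 (hev1.and (hev2.and hev3))
  refine ⟨N, fun n hn => ?_⟩
  obtain ⟨h1, h2, h3⟩ := hN n hn
  set M := m n with hMdef
  have hM1 : (1:ℝ) ≤ M := by exact_mod_cast h2
  have hsqm : Measurable (fun t : ℝ => t ^ 2) := by fun_prop
  have hjint : ∀ j ∈ Finset.range M, Integrable (fun ω => Y n j ω ^ 2) μ := fun j hj =>
    integrable_transfer (hXmeas n) (hYdist n j (Finset.mem_range.1 hj)) hsqm (hn2int n)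
  have hfint : Integrable (fun ω => ∑ j ∈ Finset.range M, Y n j ω ^ 2) μ :=
    integrable_finset_sum _ hjint
  have hfI : ∫ ω, (∑ j ∈ Finset.range M, Y n j ω ^ 2) ∂μ = M * ∫ ω, X n ω ^ 2 ∂μ := by
    rw [integral_finset_sum _ hjint,
      Finset.sum_congr rfl (fun j hj => integral_transfer (hXmeas n)
        (hYdist n j (Finset.mem_range.1 hj)) hsqm)]
    simp [nsmul_eq_mul]; exact Or.inl rfl
  have hmarkov := mul_meas_ge_le_integral_of_nonneg
    (ae_of_all μ fun ω => Finset.sum_nonneg fun j _ => sq_nonneg (Y n j ω)) hfint (c * M)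
  have hbad1 : μ {ω | c * M ≤ ∑ j ∈ Finset.range M, Y n j ω ^ 2} ≤ ENNReal.ofReal r := by
    have hfin : μ {ω | c * M ≤ ∑ j ∈ Finset.range M, Y n j ω ^ 2} ≠ ⊤ := measure_ne_top μ _
    rw [ENNReal.le_ofReal_iff_toReal_le hfin hrpos.le]
    have h4 : (μ {ω | c * M ≤ ∑ j ∈ Finset.range M, Y n j ω ^ 2}).toReal
        ≤ ((M:ℝ) * (E2 + 1)) / (c * M) := by
      rw [le_div_iff₀ (by positivity)]
      calc (μ {ω | c * M ≤ ∑ j ∈ Finset.range M, Y n j ω ^ 2}).toReal * (c * M)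
          = c * M * (μ {ω | c * M ≤ ∑ j ∈ Finset.range M, Y n j ω ^ 2}).toReal := by ring
        _ ≤ ∫ ω, (∑ j ∈ Finset.range M, Y n j ω ^ 2) ∂μ := hmarkov
        _ = M * ∫ ω, X n ω ^ 2 ∂μ := hfI
        _ ≤ M * (E2 + 1) := mul_le_mul_of_nonneg_left h1 (by positivity)
    refine h4.trans ?_
    have h5 : ((M:ℝ) * (E2 + 1)) / (c * M) = (E2 + 1) / c := by
      rw [mul_comm c M, ← div_div, mul_comm (M:ℝ), mul_div_assoc,
        div_self (by positivity : (M:ℝ) ≠ 0), mul_one]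
    rw [h5, hcdef, div_div_eq_mul_div, mul_comm, mul_div_assoc,
      div_self (by positivity : E2 + 1 ≠ 0), mul_one]
  have haeG : ∀ᵐ ω ∂μ, ∀ j, j < M → 0 ≤ Y n j ω := by
    rw [ae_all_iff]
    intro j
    by_cases hj : j < M
    · exact (ae_nonneg_of_map_eq (hXmeas n) (hXnonneg n) (hYdist n j hj)).mono
        (fun ω h _ => h)
    · exact ae_of_all _ (fun ω h => absurd h hj)
  set G := {ω : Ω | ∀ j, j < M → 0 ≤ Y n j ω} with hGdef
  have hGc : μ Gᶜ = 0 := by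
    have := ae_iff.1 haeG
    simpa [hGdef, Set.compl_setOf] using this
  set A := {ω | ε * (∑ j ∈ Finset.range M, Y n j ω ^ 3) <
    (∑ j ∈ Finset.range M, ∑ k ∈ Finset.range j, Y n j ω ^ 2 * Y n k ω ^ 2) / (M:ℝ)}
    with hAdef
  have hsub : A ∩ G ⊆ {ω | c * M ≤ ∑ j ∈ Finset.range M, Y n j ω ^ 2}
      ∪ {ω | (∑ j ∈ Finset.range M, Y n j ω ^ 3) < C * M} := by
    rintro ω ⟨hA, hG⟩
    simp only [hAdef, Set.mem_setOf_eq] at hA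
    by_cases hs2 : (∑ j ∈ Finset.range M, Y n j ω ^ 2) ≤ c * M
    · right
      exact alg_key h2 (fun j hj => hG j hj) hε hcpos hA hs2
    · left
      exact (not_le.1 hs2).le
  calc μ A ≤ μ ((A ∩ G) ∪ Gᶜ) := by
        apply measure_mono
        intro ω hω
        by_cases hg : ω ∈ G
        · exact Or.inl ⟨hω, hg⟩
        · exact Or.inr hg
    _ ≤ μ (A ∩ G) + μ Gᶜ := measure_union_le _ _
    _ = μ (A ∩ G) := by rw [hGc, add_zero]
    _ ≤ μ ({ω | c * M ≤ ∑ j ∈ Finset.range M, Y n j ω ^ 2}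
        ∪ {ω | (∑ j ∈ Finset.range M, Y n j ω ^ 3) < C * M}) := measure_mono hsub
    _ ≤ μ {ω | c * M ≤ ∑ j ∈ Finset.range M, Y n j ω ^ 2}
        + μ {ω | (∑ j ∈ Finset.range M, Y n j ω ^ 3) < C * M} := measure_union_le _ _
    _ ≤ ENNReal.ofReal r + ENNReal.ofReal r := add_le_add hbad1 h3
    _ = d := by
        rw [← ENNReal.ofReal_add hrpos.le hrpos.le]
        have h6 : r + r = d.toReal := by rw [hr]; ring
        rw [h6, ENNReal.ofReal_toReal hdne]
    _ ≤ δ := min_le_left _ _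
end
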